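/- arXiv:2403.18763 — 4 statements merged into one kernel-verified Lean document; each statement's English description precedes it below -/
import Mathlib

section
/- (Explicit presentation of the Brylinski–Kato filtration modulo integral Witt vectors.) Assume O admits a coefficient field, i.e. a subfield K ⊆ O mapping isomorphically onto the residue field κ. Then for every r ≥ 1 and n ≥ 1, every a ∈ fil^log_r Wₙ(L) can be written as a = b + Σ_{α} V^{j_α}([μ_α · z^{i_α}]) (a finite sum), with b ∈ Wₙ(O), μ_α ∈ K, 0 ≤ j_α ≤ n−1, and integers i_α satisfying −r ≤ i_α · p^{n−1−j_α} < 0. -/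
noncomputable section

open scoped Classical

/-- A discretely valued field: a field `L` together with a normalized additive valuation
`v : L → ℤ ∪ {∞}` and a uniformizer `z` (so `v z = 1`).  The valuation ring is
`O = {a : L | 0 ≤ v a}`, with maximal ideal `𝔪 = {a : L | 1 ≤ v a}`. -/
structure DVField (L : Type) [Field L] : Type where
  v : L → WithTop ℤ
  z : L
  v_top : ∀ a : L, v a = ⊤ ↔ a = 0
  v_mul : ∀ a b : L, v (a * b) = v a + v b
  v_add : ∀ a b : L, min (v a) (v b) ≤ v (a + b)
  v_z : v z = 1

namespace DVField

variable {L : Type} [Field L]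

/-- `Wₙ(O) ⊆ Wₙ(L)`: the truncated Witt vectors all of whose components are integral. -/
def WO (D : DVField L) (p n : ℕ) : Set (TruncatedWittVector p n L) :=
  {x | ∀ i : Fin n, 0 ≤ D.v (x.coeff i)}

/-- The Brylinski–Kato filtration
`fil^log_r Wₙ(L) = {(a₀, …, a_{n-1}) | p^{n-1-i} · v(aᵢ) ≥ -r for all i}`. -/
def filLog (D : DVField L) (p r n : ℕ) : Set (TruncatedWittVector p n L) :=
  {x | ∀ i : Fin n, (↑(-(r : ℤ)) : WithTop ℤ) ≤ p ^ (n - 1 - (i : ℕ)) • D.v (x.coeff i)}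

end DVField

/-- The Verschiebung `V : Wₙ(L) → W_{n+1}(L)`, shifting components. -/
def wV {p : ℕ} {L : Type} [Field L] {n : ℕ} (x : TruncatedWittVector p n L) :
    TruncatedWittVector p (n + 1) L :=
  TruncatedWittVector.mk p fun i =>
    if h : (i : ℕ) = 0 then 0 else x.coeff ⟨(i : ℕ) - 1, by have := i.isLt; omega⟩

/-- The iterated Verschiebung `V^{n-m} : W_m(L) → Wₙ(L)` (for `m ≤ n`), given by shifting
components by `n - m`. -/
def wVit {p : ℕ} {L : Type} [Field L] {m n : ℕ} (x : TruncatedWittVector p m L) :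
    TruncatedWittVector p n L :=
  TruncatedWittVector.mk p fun i =>
    if h : n - m ≤ (i : ℕ) ∧ (i : ℕ) - (n - m) < m then x.coeff ⟨(i : ℕ) - (n - m), h.2⟩ else 0

/-- The restriction `R : W_{n+1}(L) → Wₙ(L)`, dropping the last component. -/
def wR {p : ℕ} {L : Type} [Field L] {n : ℕ} (x : TruncatedWittVector p (n + 1) L) :
    TruncatedWittVector p n L :=
  TruncatedWittVector.mk p fun i => x.coeff i.castSucc

/-- The iterated restriction `R^{m-n} : W_m(L) → Wₙ(L)` (for `n ≤ m`), keeping the first `n`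
components. -/
def wRes {p : ℕ} {L : Type} [Field L] {m n : ℕ} (x : TruncatedWittVector p m L) :
    TruncatedWittVector p n L :=
  TruncatedWittVector.mk p fun i => if h : (i : ℕ) < m then x.coeff ⟨(i : ℕ), h⟩ else 0

/-- The Frobenius `F : W_{n+1}(L) → Wₙ(L)` in characteristic `p`:
componentwise `p`-th power followed by restriction. -/
def wF {p : ℕ} {L : Type} [Field L] {n : ℕ} (x : TruncatedWittVector p (n + 1) L) :
    TruncatedWittVector p n L :=
  TruncatedWittVector.mk p fun i => x.coeff i.castSucc ^ p

/-- The Teichmüller lift `[a] = (a, 0, …, 0)`. -/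
def wT (p : ℕ) {L : Type} [Field L] (n : ℕ) (a : L) : TruncatedWittVector p n L :=
  TruncatedWittVector.mk p fun i => if (i : ℕ) = 0 then a else 0

/-- The map `p̲ : Wₙ(L) → W_{n+1}(L)`: lift to length `n+1` (by appending a zero component)
and multiply by `p`. -/
def wP {p : ℕ} [Fact p.Prime] {L : Type} [Field L] {n : ℕ} (x : TruncatedWittVector p n L) :
    TruncatedWittVector p (n + 1) L :=
  p • (wRes x : TruncatedWittVector p (n + 1) L)

namespace DVField

variable {L : Type} [Field L]

/-- The Kato–Matsuda filtration
`fil_r Wₙ(L) = fil^log_{r-1} Wₙ(L) + V^{n-m}(fil^log_r W_m(L))` where `m = min(v_p(r), n)`,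
and `fil_0 Wₙ(L) = Wₙ(O)`. -/
def filKM (D : DVField L) (p : ℕ) [Fact p.Prime] (r n : ℕ) :
    Set (TruncatedWittVector p n L) :=
  if r = 0 then D.WO p n
  else {x | ∃ a ∈ D.filLog p (r - 1) n,
    ∃ b ∈ D.filLog p r (min (padicValNat p r) n), x = a + wVit b}

/-- The `p`-saturation `Fil^p_r Wₙ(L) = Σ_{s=0}^{n-1} p^s · fil_{r·p^s} Wₙ(L)`. -/
def FilP (D : DVField L) (p : ℕ) [Fact p.Prime] (r n : ℕ) :
    Set (TruncatedWittVector p n L) :=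
  {x | ∃ f : Fin n → TruncatedWittVector p n L,
      (∀ s : Fin n, f s ∈ D.filKM p (r * p ^ (s : ℕ)) n) ∧
      x = ∑ s : Fin n, p ^ (s : ℕ) • f s}

end DVField

namespace DVField

variable {L : Type} [Field L]

/-- The valuation ring `O` is henselian: every monic polynomial with integral coefficients
having an integral approximate root at which the derivative is a unit has an integral
actual root refining it. -/
def IsHenselian (D : DVField L) : Prop :=
  ∀ f : Polynomial L, f.Monic → (∀ i : ℕ, 0 ≤ D.v (f.coeff i)) →
    ∀ a₀ : L, 0 ≤ D.v a₀ → 1 ≤ D.v (f.eval a₀) →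
      D.v ((Polynomial.derivative f).eval a₀) = 0 →
        ∃ a : L, 0 ≤ D.v a ∧ f.eval a = 0 ∧ 1 ≤ D.v (a - a₀)

/-- `K` is a coefficient field for the valuation ring `O`: a subfield of `L` contained in `O`
mapping isomorphically onto the residue field `κ = O/𝔪` (surjectivity onto `κ` suffices, since
a subfield of `O` automatically injects into `κ`). -/
def IsCoeffField (D : DVField L) (K : Subfield L) : Prop :=
  (∀ a ∈ K, 0 ≤ D.v a) ∧ (∀ a : L, 0 ≤ D.v a → ∃ μ ∈ K, 1 ≤ D.v (a - μ))

end DVField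


namespace Statement7Aux
open MvPolynomial

open MvPolynomial

lemma isWH_neg {σ R : Type*} [CommRing R] {w : σ → ℕ} {φ : MvPolynomial σ R} {m : ℕ}
    (h : φ.IsWeightedHomogeneous w m) : (-φ).IsWeightedHomogeneous w m := by
  intro d hd
  exact h (by simpa using hd)

lemma isWH_sub {σ R : Type*} [CommRing R] {w : σ → ℕ} {φ ψ : MvPolynomial σ R} {m : ℕ}
    (h : φ.IsWeightedHomogeneous w m) (h2 : ψ.IsWeightedHomogeneous w m) :
    (φ - ψ).IsWeightedHomogeneous w m := by
  rw [sub_eq_add_neg]; exact h.add (isWH_neg h2)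

lemma isWH_pow {σ R : Type*} [CommSemiring R] {w : σ → ℕ} {φ : MvPolynomial σ R} {n : ℕ}
    (h : φ.IsWeightedHomogeneous w n) (k : ℕ) : (φ ^ k).IsWeightedHomogeneous w (k * n) := by
  induction k with
  | zero => simpa using isWeightedHomogeneous_one R w
  | succ k ih =>
      rw [pow_succ, Nat.succ_mul]
      exact ih.mul h

lemma isWH_rename {σ τ R : Type*} [CommSemiring R] (f : σ → τ) (w : τ → ℕ)
    {φ : MvPolynomial σ R} {m : ℕ} (h : φ.IsWeightedHomogeneous (fun i => w (f i)) m) :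
    (rename f φ).IsWeightedHomogeneous w m := by
  intro d hd
  obtain ⟨u, rfl, hu⟩ := coeff_rename_ne_zero f φ d hd
  have h2 := h hu
  rw [← h2, Finsupp.weight_apply, Finsupp.weight_apply]
  exact Finsupp.sum_mapDomain_index (by simp) (by intro b m₁ m₂; rw [add_smul])

lemma isWH_bind₁ {σ τ : Type*} (f : σ → MvPolynomial τ ℚ) (w : σ → ℕ) (w' : τ → ℕ) (c : ℕ)
    (hf : ∀ i, (f i).IsWeightedHomogeneous w' (w i * c)) {φ : MvPolynomial σ ℚ} {m : ℕ}
    (hφ : φ.IsWeightedHomogeneous w m) : (bind₁ f φ).IsWeightedHomogeneous w' (m * c) := by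
  conv_lhs => rw [as_sum φ]
  rw [map_sum]
  apply IsWeightedHomogeneous.sum
  intro d hd
  rw [bind₁_monomial]
  have hw : ∑ i ∈ d.support, d i * (w i * c) = m * c := by
    have h2 := hφ (mem_support_iff.mp hd)
    rw [Finsupp.weight_apply] at h2
    have h3 : ∑ i ∈ d.support, d i * w i = m := by
      simpa [Finsupp.sum, smul_eq_mul] using h2
    calc ∑ i ∈ d.support, d i * (w i * c) = (∑ i ∈ d.support, d i * w i) * c := by
          rw [Finset.sum_mul]; exact Finset.sum_congr rfl fun i _ => by ring
      _ = m * c := by rw [h3]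
  have hprod := IsWeightedHomogeneous.prod d.support (fun i => f i ^ d i)
    (fun i => d i * (w i * c)) (fun i _ => isWH_pow (hf i) (d i))
  rw [hw] at hprod
  simpa using (isWeightedHomogeneous_C w' (coeff d φ)).mul hprod

lemma isWH_wittPoly (p : ℕ) [Fact p.Prime] (k : ℕ) :
    (wittPolynomial p ℚ k).IsWeightedHomogeneous (fun j => p ^ j) (p ^ k) := by
  rw [wittPolynomial]
  apply IsWeightedHomogeneous.sum
  intro i hi
  apply isWeightedHomogeneous_monomial
  rw [Finsupp.weight_apply, Finsupp.sum_single_index (by simp), smul_eq_mul, ← pow_add]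
  congr 1
  have := Finset.mem_range.mp hi
  omega

lemma isWH_xInTermsOfW (p : ℕ) [Fact p.Prime] (n : ℕ) :
    (xInTermsOfW p ℚ n).IsWeightedHomogeneous (fun j => p ^ j) (p ^ n) := by
  induction n using Nat.strong_induction_on with
  | _ n ih =>
  rw [xInTermsOfW_eq]
  have h1 : (X n - ∑ i ∈ Finset.range n, C ((p : ℚ) ^ i) * xInTermsOfW p ℚ i ^ p ^ (n - i)
      : MvPolynomial ℕ ℚ).IsWeightedHomogeneous (fun j => p ^ j) (p ^ n) := by
    apply isWH_sub
    · exact isWeightedHomogeneous_X _ _ n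
    · apply IsWeightedHomogeneous.sum
      intro i hi
      have hlt := Finset.mem_range.mp hi
      have h2 := isWH_pow (ih i hlt) (p ^ (n - i))
      have h3 := (isWeightedHomogeneous_C (fun j : ℕ => p ^ j) ((p : ℚ) ^ i)).mul h2
      have h4 : p ^ (n - i) * p ^ i = p ^ n := by rw [← pow_add]; congr 1; omega
      simpa [h4] using h3
  simpa using h1.mul (isWeightedHomogeneous_C (fun j : ℕ => p ^ j) _)

lemma isWH_wittStructureRat (p : ℕ) [Fact p.Prime] {b : ℕ} (Φ : MvPolynomial (Fin b) ℚ)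
    (hΦ : Φ.IsWeightedHomogeneous (fun _ => 1) 1) (n : ℕ) :
    (wittStructureRat p Φ n).IsWeightedHomogeneous (fun x : Fin b × ℕ => p ^ x.2) (p ^ n) := by
  have hf : ∀ k : ℕ,
      (bind₁ (fun i : Fin b => rename (Prod.mk i) (wittPolynomial p ℚ k)) Φ).IsWeightedHomogeneous
        (fun x : Fin b × ℕ => p ^ x.2) ((fun k => p ^ k) k * 1) := by
    intro k
    have h2 := isWH_bind₁ (fun i : Fin b => rename (Prod.mk i) (wittPolynomial p ℚ k))
      (fun _ => 1) (fun x : Fin b × ℕ => p ^ x.2) (p ^ k)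
      (fun i => by
        rw [one_mul]
        exact isWH_rename _ _ (isWH_wittPoly p k)) hΦ
    simpa using h2
  have h3 := isWH_bind₁ _ (fun k => p ^ k) (fun x : Fin b × ℕ => p ^ x.2) 1 hf
    (isWH_xInTermsOfW p n)
  simpa [wittStructureRat] using h3

lemma isWH_int {ι : Type*} (ψ : MvPolynomial ι ℤ) (w : ι → ℕ) (m : ℕ)
    (h : (map (Int.castRingHom ℚ) ψ).IsWeightedHomogeneous w m) :
    ψ.IsWeightedHomogeneous w m := by
  intro d hd
  apply h
  rw [coeff_map]
  simpa using hd

lemma isWH_wittAdd (p : ℕ) [Fact p.Prime] (l : ℕ) :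
    (WittVector.wittAdd p l).IsWeightedHomogeneous (fun x : Fin 2 × ℕ => p ^ x.2) (p ^ l) := by
  apply isWH_int
  rw [show WittVector.wittAdd p l = wittStructureInt p (X 0 + X 1) l from rfl,
    map_wittStructureInt]
  apply isWH_wittStructureRat
  rw [show (map (Int.castRingHom ℚ) (X 0 + X 1 : MvPolynomial (Fin 2) ℤ))
      = X 0 + X 1 by simp]
  exact (isWeightedHomogeneous_X _ _ 0).add (isWeightedHomogeneous_X _ _ 1)

lemma isWH_wittNeg (p : ℕ) [Fact p.Prime] (l : ℕ) :
    (WittVector.wittNeg p l).IsWeightedHomogeneous (fun x : Fin 1 × ℕ => p ^ x.2) (p ^ l) := by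
  apply isWH_int
  rw [show WittVector.wittNeg p l = wittStructureInt p (-X 0) l from rfl,
    map_wittStructureInt]
  apply isWH_wittStructureRat
  rw [show (map (Int.castRingHom ℚ) (-X 0 : MvPolynomial (Fin 1) ℤ)) = -X 0 by simp]
  exact isWH_neg (isWeightedHomogeneous_X _ _ 0)


section ValArith


variable {L : Type} [Field L] (D : DVField L)

lemma v_zero : D.v 0 = ⊤ := (D.v_top 0).2 rfl

lemma v_ne_top {x : L} (hx : x ≠ 0) : D.v x ≠ ⊤ := fun h => hx ((D.v_top x).1 h)

lemma coe_nsmul (k : ℕ) (a : ℤ) : ((k • a : ℤ) : WithTop ℤ) = k • (a : WithTop ℤ) := by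
  push_cast; rfl

lemma coe_fsum {ι : Type*} (s : Finset ι) (f : ι → ℤ) :
    ((∑ i ∈ s, f i : ℤ) : WithTop ℤ) = ∑ i ∈ s, ((f i : WithTop ℤ)) := by
  induction s using Finset.induction_on with
  | empty => simp
  | @insert _ _ h ih => rw [Finset.sum_insert h, Finset.sum_insert h, WithTop.coe_add, ih]

lemma v_one : D.v 1 = 0 := by
  have h := D.v_mul 1 1
  rw [one_mul] at h
  have hne : D.v 1 ≠ ⊤ := v_ne_top D one_ne_zero
  obtain ⟨a, ha⟩ := WithTop.ne_top_iff_exists.mp hne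
  rw [← ha] at h ⊢
  rw [← WithTop.coe_add, WithTop.coe_eq_coe] at h
  have : a = 0 := by omega
  rw [this]; rfl

lemma v_neg (x : L) : D.v (-x) = D.v x := by
  have h1 : D.v (-1 : L) = 0 := by
    have h := D.v_mul (-1) (-1)
    rw [show ((-1 : L) * (-1 : L)) = 1 by ring, v_one] at h
    have hne : D.v (-1 : L) ≠ ⊤ := v_ne_top D (by norm_num)
    obtain ⟨a, ha⟩ := WithTop.ne_top_iff_exists.mp hne
    rw [← ha] at h ⊢
    rw [show ((0 : WithTop ℤ)) = ((0 : ℤ) : WithTop ℤ) from rfl, ← WithTop.coe_add,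
      WithTop.coe_eq_coe] at h
    have : a = 0 := by omega
    rw [this]; rfl
  rw [show (-x) = (-1 : L) * x by ring, D.v_mul, h1, zero_add]

lemma v_pow (x : L) (k : ℕ) : D.v (x ^ k) = k • D.v x := by
  induction k with
  | zero => rw [pow_zero, v_one]; exact (zero_nsmul _).symm
  | succ k ih => rw [pow_succ, D.v_mul, ih, succ_nsmul]

lemma v_zpow (i : ℤ) : D.v (D.z ^ i) = (i : WithTop ℤ) := by
  have hz : D.z ≠ 0 := by
    intro h
    have := D.v_z
    rw [h, v_zero] at this
    exact (by simp : (⊤ : WithTop ℤ) ≠ 1) this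
  have hzinv : D.v (D.z⁻¹) = ((-1 : ℤ) : WithTop ℤ) := by
    have h := D.v_mul D.z⁻¹ D.z
    rw [inv_mul_cancel₀ hz, v_one, D.v_z] at h
    have hne : D.v (D.z⁻¹) ≠ ⊤ := v_ne_top D (inv_ne_zero hz)
    obtain ⟨a, ha⟩ := WithTop.ne_top_iff_exists.mp hne
    rw [← ha] at h ⊢
    rw [show (1 : WithTop ℤ) = ((1 : ℤ) : WithTop ℤ) from rfl, ← WithTop.coe_add,
      show (0 : WithTop ℤ) = ((0 : ℤ) : WithTop ℤ) from rfl, WithTop.coe_eq_coe] at h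
    rw [WithTop.coe_eq_coe]
    omega
  induction i using Int.induction_on with
  | zero => rw [zpow_zero, v_one]; rfl
  | succ k ih =>
      rw [zpow_add_one₀ hz, D.v_mul, ih, D.v_z]
      rw [show ((k : ℤ) + 1 : ℤ) = (k + 1 : ℤ) from rfl]
      push_cast
      rfl
  | pred k ih =>
      rw [zpow_sub_one₀ hz, D.v_mul, ih, hzinv, ← WithTop.coe_add, WithTop.coe_eq_coe]
      ring

lemma v_intCast (p : ℕ) [Fact p.Prime] [CharP L p] (c : ℤ) : 0 ≤ D.v ((c : L)) := by
  by_cases h : (c : L) = 0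
  · rw [h, v_zero]; exact le_top
  · have hfrob : ((c : L)) ^ p = (c : L) := by
      have h2 : ((c : ZMod p)) ^ p = (c : ZMod p) := ZMod.pow_card _
      calc ((c : L)) ^ p = (ZMod.castHom dvd_rfl L ((c : ZMod p))) ^ p := by rw [map_intCast]
        _ = ZMod.castHom dvd_rfl L (((c : ZMod p)) ^ p) := (map_pow _ _ _).symm
        _ = (c : L) := by rw [h2, map_intCast]
    have hv := congrArg D.v hfrob
    rw [v_pow] at hv
    obtain ⟨a, ha⟩ := WithTop.ne_top_iff_exists.mp (v_ne_top D h)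
    rw [← ha, ← coe_nsmul, WithTop.coe_eq_coe] at hv
    have hp2 : 2 ≤ p := (Fact.out : p.Prime).two_le
    have ha0 : a = 0 := by
      have hpa : (p : ℤ) * a = a := by rw [← nsmul_eq_mul]; exact_mod_cast hv
      have h3 : a * ((p : ℤ) - 1) = 0 := by linarith
      have h5 : (2 : ℤ) ≤ (p : ℤ) := by exact_mod_cast hp2
      rcases mul_eq_zero.mp h3 with h4 | h4
      · exact h4
      · omega
    rw [← ha, ha0]; rfl

lemma v_sum_ge {ι : Type*} (s : Finset ι) (f : ι → L) (c : WithTop ℤ)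
    (h : ∀ i ∈ s, c ≤ D.v (f i)) : c ≤ D.v (∑ i ∈ s, f i) := by
  induction s using Finset.induction_on with
  | empty => rw [Finset.sum_empty, v_zero]; exact le_top
  | @insert a s ha ih =>
      rw [Finset.sum_insert ha]
      refine le_trans (le_min (h a (Finset.mem_insert_self a s)) ?_) (D.v_add _ _)
      exact ih fun i hi => h i (Finset.mem_insert_of_mem hi)

lemma v_prod_eq {ι : Type*} (s : Finset ι) (f : ι → L) :
    D.v (∏ i ∈ s, f i) = ∑ i ∈ s, D.v (f i) := by
  induction s using Finset.induction_on with
  | empty => rw [Finset.prod_empty, Finset.sum_empty, v_one]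
  | @insert a s ha ih =>
      rw [Finset.prod_insert ha, Finset.sum_insert ha, D.v_mul, ih]

/-! arithmetic -/

def sB (p n r l : ℕ) : ℤ := ((r : ℤ) * (p : ℤ) ^ (l + 1)) / (p : ℤ) ^ n

lemma sB_nonneg (p n r l : ℕ) : 0 ≤ sB p n r l :=
  Int.ediv_nonneg (by positivity) (by positivity)

lemma sB_zero (p n l : ℕ) : sB p n 0 l = 0 := by simp [sB]

lemma sB_succ {p : ℕ} (hp : 0 < (p : ℤ)) (n r l : ℕ) : sB p (n + 1) r (l + 1) = sB p n r l := by
  unfold sB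
  rw [show ((r : ℤ) * (p : ℤ) ^ (l + 1 + 1)) = (p : ℤ) * ((r : ℤ) * (p : ℤ) ^ (l + 1)) by ring,
    show ((p : ℤ) ^ (n + 1)) = (p : ℤ) * (p : ℤ) ^ n by ring]
  exact Int.mul_ediv_mul_of_pos _ _ hp

lemma ediv_mul_le' (a q : ℤ) (hq : 0 < q) : a / q * q ≤ a := by
  have h1 := Int.emod_nonneg a (ne_of_gt hq)
  have h2 := Int.mul_ediv_add_emod a q
  linarith [mul_comm (a / q) q]

lemma neg_ediv_le (r m q : ℤ) (hq : 0 < q) (h : -r ≤ q * m) : -(r / q) ≤ m := by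
  by_contra hcon
  push_neg at hcon
  have h1 : m ≤ -(r / q) - 1 := by omega
  have h2 : q * m ≤ q * (-(r / q) - 1) := by
    exact mul_le_mul_of_nonneg_left h1 (le_of_lt hq)
  have h3 : r < (r / q + 1) * q := Int.lt_ediv_add_one_mul_self r hq
  nlinarith

lemma sB_eq {p : ℕ} (hp : 0 < (p : ℤ)) (n r l : ℕ) (h : l + 1 ≤ n) :
    sB p n r l = (r : ℤ) / (p : ℤ) ^ (n - (l + 1)) := by
  unfold sB
  rw [show ((p : ℤ) ^ n) = (p : ℤ) ^ (l + 1) * (p : ℤ) ^ (n - (l + 1)) by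
      rw [← pow_add]; congr 1; omega,
    show ((r : ℤ) * (p : ℤ) ^ (l + 1)) = (p : ℤ) ^ (l + 1) * (r : ℤ) by ring]
  exact Int.mul_ediv_mul_of_pos _ _ (by positivity)

lemma sum_ediv_le {ι : Type*} (s : Finset ι) (e : ι → ℕ) (f : ι → ℤ) (hf : ∀ i, 0 ≤ f i)
    (q : ℤ) (hq : 0 < q) :
    ∑ i ∈ s, (e i : ℤ) * (f i / q) ≤ (∑ i ∈ s, (e i : ℤ) * f i) / q := by
  induction s using Finset.induction_on with
  | empty => simp
  | @insert a s ha ih =>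
      rw [Finset.sum_insert ha, Finset.sum_insert ha]
      have h1 : (e a : ℤ) * (f a / q) ≤ ((e a : ℤ) * f a) / q := by
        rw [Int.le_ediv_iff_mul_le hq]
        calc (e a : ℤ) * (f a / q) * q = (e a : ℤ) * (f a / q * q) := by ring
          _ ≤ (e a : ℤ) * f a := mul_le_mul_of_nonneg_left (ediv_mul_le' _ _ hq) (by positivity)
      have h2 : ((e a : ℤ) * f a) / q + (∑ i ∈ s, (e i : ℤ) * f i) / q ≤
          ((e a : ℤ) * f a + ∑ i ∈ s, (e i : ℤ) * f i) / q := by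
        rw [Int.le_ediv_iff_mul_le hq, add_mul]
        exact add_le_add (ediv_mul_le' _ _ hq) (ediv_mul_le' _ _ hq)
      exact le_trans (add_le_add h1 ih) h2

lemma monomial_sB_le {p : ℕ} (hp : 0 < (p : ℤ)) (n r j : ℕ) {ι : Type*} (s : Finset ι)
    (e : ι → ℕ) (lv : ι → ℕ) (hw : ∑ x ∈ s, e x * p ^ lv x = p ^ j) :
    ∑ x ∈ s, (e x : ℤ) * sB p n r (lv x) ≤ sB p n r j := by
  have h1 := sum_ediv_le s e (fun x => (r : ℤ) * (p : ℤ) ^ (lv x + 1)) (fun x => by positivity)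
    ((p : ℤ) ^ n) (by positivity)
  have h2 : (∑ x ∈ s, (e x : ℤ) * ((r : ℤ) * (p : ℤ) ^ (lv x + 1)))
      = (r : ℤ) * (p : ℤ) ^ (j + 1) := by
    have h3 : ((∑ x ∈ s, e x * p ^ lv x : ℕ) : ℤ) = ((p ^ j : ℕ) : ℤ) := by exact_mod_cast hw
    push_cast at h3
    calc (∑ x ∈ s, (e x : ℤ) * ((r : ℤ) * (p : ℤ) ^ (lv x + 1)))
        = (r : ℤ) * (p : ℤ) * ∑ x ∈ s, (e x : ℤ) * (p : ℤ) ^ lv x := by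
          rw [Finset.mul_sum]; exact Finset.sum_congr rfl fun x _ => by ring
      _ = (r : ℤ) * (p : ℤ) ^ (j + 1) := by rw [h3]; ring
  calc ∑ x ∈ s, (e x : ℤ) * sB p n r (lv x) ≤ _ := h1
    _ = sB p n r j := by rw [h2]; rfl


end ValArith

section WittBounds

variable {L : Type} [Field L] (D : DVField L) (p : ℕ) [Fact p.Prime] [CharP L p]

include p in
lemma v_aeval {ι : Type*} (φ : MvPolynomial ι ℤ) (g : ι → L) (t : ℤ)
    (h : ∀ d ∈ φ.support, ((-t : ℤ) : WithTop ℤ) ≤ ∑ x ∈ d.support, d x • D.v (g x)) :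
    ((-t : ℤ) : WithTop ℤ) ≤ D.v (MvPolynomial.aeval g φ) := by
  rw [MvPolynomial.aeval_def, MvPolynomial.eval₂_eq]
  apply v_sum_ge
  intro d hd
  rw [D.v_mul]
  have h1 : 0 ≤ D.v ((algebraMap ℤ L) (MvPolynomial.coeff d φ)) := by
    rw [eq_intCast]; exact v_intCast D p _
  have h2 : D.v (∏ x ∈ d.support, g x ^ d x) = ∑ x ∈ d.support, d x • D.v (g x) := by
    rw [v_prod_eq]
    exact Finset.sum_congr rfl fun x _ => v_pow D (g x) (d x)
  calc ((-t : ℤ) : WithTop ℤ) ≤ ∑ x ∈ d.support, d x • D.v (g x) := h d hd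
    _ = D.v (∏ x ∈ d.support, g x ^ d x) := h2.symm
    _ ≤ _ := le_add_of_nonneg_left h1

lemma v_peval_bound {b : ℕ} (φ : MvPolynomial (Fin b × ℕ) ℤ) (l n r : ℕ)
    (hφ : φ.IsWeightedHomogeneous (fun x : Fin b × ℕ => p ^ x.2) (p ^ l))
    (g : Fin b × ℕ → L) (hg : ∀ x, ((-(sB p n r x.2) : ℤ) : WithTop ℤ) ≤ D.v (g x)) :
    ((-(sB p n r l) : ℤ) : WithTop ℤ) ≤ D.v (MvPolynomial.aeval g φ) := by
  have hp0 : 0 < (p : ℤ) := by exact_mod_cast (Fact.out : p.Prime).pos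
  apply v_aeval D p
  intro d hd
  have hw : ∑ x ∈ d.support, d x * p ^ x.2 = p ^ l := by
    have h3 := hφ (MvPolynomial.mem_support_iff.mp hd)
    rw [Finsupp.weight_apply] at h3
    simpa [Finsupp.sum, smul_eq_mul] using h3
  have hmono := monomial_sB_le hp0 n r l d.support (fun x => d x) (fun x => x.2) hw
  calc ((-(sB p n r l) : ℤ) : WithTop ℤ)
      ≤ ((∑ x ∈ d.support, -((d x : ℤ) * sB p n r x.2) : ℤ) : WithTop ℤ) := by
        rw [WithTop.coe_le_coe, Finset.sum_neg_distrib]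
        exact neg_le_neg hmono
    _ = ∑ x ∈ d.support, ((-((d x : ℤ) * sB p n r x.2) : ℤ) : WithTop ℤ) := coe_fsum _ _
    _ ≤ ∑ x ∈ d.support, d x • D.v (g x) := by
        apply Finset.sum_le_sum
        intro x _
        have h4 : ((-((d x : ℤ) * sB p n r x.2) : ℤ) : WithTop ℤ)
            = (d x) • ((-(sB p n r x.2) : ℤ) : WithTop ℤ) := by
          rw [← coe_nsmul, WithTop.coe_eq_coe, nsmul_eq_mul]; ring
        rw [h4]
        exact nsmul_le_nsmul_right (hg x) _

lemma coeff_add_bound (n r : ℕ) (X Y : WittVector p L)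
    (hX : ∀ l, ((-(sB p n r l) : ℤ) : WithTop ℤ) ≤ D.v (X.coeff l))
    (hY : ∀ l, ((-(sB p n r l) : ℤ) : WithTop ℤ) ≤ D.v (Y.coeff l)) (l : ℕ) :
    ((-(sB p n r l) : ℤ) : WithTop ℤ) ≤ D.v ((X + Y).coeff l) := by
  rw [WittVector.add_coeff]
  unfold WittVector.peval
  apply v_peval_bound D p _ l n r (isWH_wittAdd p l)
  rintro ⟨c, l'⟩
  fin_cases c
  · simpa [Function.uncurry] using hX l'
  · simpa [Function.uncurry] using hY l'

lemma coeff_neg_bound (n r : ℕ) (X : WittVector p L)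
    (hX : ∀ l, ((-(sB p n r l) : ℤ) : WithTop ℤ) ≤ D.v (X.coeff l)) (l : ℕ) :
    ((-(sB p n r l) : ℤ) : WithTop ℤ) ≤ D.v ((-X).coeff l) := by
  rw [WittVector.neg_coeff]
  unfold WittVector.peval
  apply v_peval_bound D p _ l n r (isWH_wittNeg p l)
  rintro ⟨c, l'⟩
  fin_cases c
  simpa [Function.uncurry] using hX l'

lemma coeff_sum_bound (n r : ℕ) {ι : Type*} (s : Finset ι) (F : ι → WittVector p L)
    (h : ∀ i ∈ s, ∀ l, ((-(sB p n r l) : ℤ) : WithTop ℤ) ≤ D.v ((F i).coeff l)) :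
    ∀ l, ((-(sB p n r l) : ℤ) : WithTop ℤ) ≤ D.v ((∑ i ∈ s, F i).coeff l) := by
  induction s using Finset.induction_on with
  | empty =>
      intro l
      rw [Finset.sum_empty, WittVector.zero_coeff, v_zero]
      exact le_top
  | @insert a s ha ih =>
      intro l
      rw [Finset.sum_insert ha]
      exact coeff_add_bound D p n r _ _ (h a (Finset.mem_insert_self a s))
        (ih fun i hi => h i (Finset.mem_insert_of_mem hi)) l

lemma neg_coeff_zero (X : WittVector p L) : (-X).coeff 0 = -(X.coeff 0) := by
  rw [WittVector.neg_coeff]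
  unfold WittVector.peval
  simp [WittVector.wittNeg_zero, Function.uncurry]

lemma sum_coeff_zero {ι : Type*} (s : Finset ι) (F : ι → WittVector p L) :
    (∑ i ∈ s, F i).coeff 0 = ∑ i ∈ s, (F i).coeff 0 := by
  induction s using Finset.induction_on with
  | empty => rw [Finset.sum_empty, Finset.sum_empty, WittVector.zero_coeff]
  | @insert a s ha ih =>
      rw [Finset.sum_insert ha, Finset.sum_insert ha, WittVector.add_coeff_zero, ih]

lemma teich_bound (n r : ℕ) (u : L) (hu : ((-(sB p n r 0) : ℤ) : WithTop ℤ) ≤ D.v u) (l : ℕ) :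
    ((-(sB p n r l) : ℤ) : WithTop ℤ) ≤ D.v ((WittVector.teichmuller p u).coeff l) := by
  cases l with
  | zero => rw [WittVector.teichmuller_coeff_zero]; exact hu
  | succ k =>
      rw [WittVector.teichmuller_coeff_pos p u _ (Nat.succ_pos k), v_zero]
      exact le_top

lemma trunc_teich (n : ℕ) (u : L) :
    WittVector.truncate n (WittVector.teichmuller p u) = wT p n u := by
  apply TruncatedWittVector.ext
  intro i
  rw [WittVector.coeff_truncate, wT, TruncatedWittVector.coeff_mk]
  rcases i with ⟨iv, hi⟩
  cases iv with
  | zero => simpa using WittVector.teichmuller_coeff_zero p u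
  | succ k => simp [WittVector.teichmuller_coeff_pos p u _ (Nat.succ_pos k)]

lemma trunc_versch (n : ℕ) (Y : WittVector p L) :
    WittVector.truncate (n + 1) (WittVector.verschiebung Y)
      = wVit (WittVector.truncate n Y) := by
  apply TruncatedWittVector.ext
  intro i
  rw [WittVector.coeff_truncate, wVit, TruncatedWittVector.coeff_mk]
  rcases i with ⟨iv, hi⟩
  dsimp only
  cases iv with
  | zero =>
      rw [WittVector.verschiebung_coeff_zero, dif_neg (by omega)]
  | succ k =>
      rw [WittVector.verschiebung_coeff_succ,
        dif_pos (show (n + 1) - n ≤ k + 1 ∧ (k + 1) - ((n + 1) - n) < n by omega),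
        WittVector.coeff_truncate]
      congr 1
      show k = (k + 1) - ((n + 1) - n)
      omega

lemma wVit_self (n : ℕ) (x : TruncatedWittVector p n L) :
    (wVit x : TruncatedWittVector p n L) = x := by
  apply TruncatedWittVector.ext
  intro i
  rcases i with ⟨iv, hi⟩
  rw [wVit, TruncatedWittVector.coeff_mk]
  dsimp only
  rw [dif_pos (show n - n ≤ iv ∧ iv - (n - n) < n by omega)]
  congr 1
  exact Fin.ext (show iv - (n - n) = iv by omega)

lemma wVit_wVit (m n : ℕ) (hmn : m ≤ n) (x : TruncatedWittVector p m L) :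
    (wVit (wVit x : TruncatedWittVector p n L) : TruncatedWittVector p (n + 1) L)
      = wVit x := by
  apply TruncatedWittVector.ext
  intro i
  rcases i with ⟨iv, hi⟩
  simp only [wVit, TruncatedWittVector.coeff_mk]
  split_ifs <;>
    first
      | rfl
      | (congr 1; exact Fin.ext (by dsimp only; omega))
      | (exfalso; omega)

lemma wVit_add (n : ℕ) (x y : TruncatedWittVector p n L) :
    (wVit (x + y) : TruncatedWittVector p (n + 1) L) = wVit x + wVit y := by
  obtain ⟨X, rfl⟩ := WittVector.truncate_surjective p n L x
  obtain ⟨Y, rfl⟩ := WittVector.truncate_surjective p n L y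
  calc (wVit (WittVector.truncate n X + WittVector.truncate n Y)
        : TruncatedWittVector p (n + 1) L)
      = wVit (WittVector.truncate n (X + Y)) := by rw [map_add]
    _ = WittVector.truncate (n + 1) (WittVector.verschiebung (X + Y)) :=
        (trunc_versch p n _).symm
    _ = WittVector.truncate (n + 1)
          (WittVector.verschiebung X + WittVector.verschiebung Y) := by rw [map_add]
    _ = WittVector.truncate (n + 1) (WittVector.verschiebung X)
          + WittVector.truncate (n + 1) (WittVector.verschiebung Y) := by rw [map_add]
    _ = _ := by rw [trunc_versch, trunc_versch]

def wVitHom (n : ℕ) : TruncatedWittVector p n L →+ TruncatedWittVector p (n + 1) L :=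
  AddMonoidHom.mk' wVit (wVit_add p n)

lemma wVit_wT_congr {n : ℕ} {m m' : ℕ} (h : m = m') {u u' : L} (hu : u = u') :
    (wVit (wT p m u) : TruncatedWittVector p n L) = wVit (wT p m' u') := by
  subst h; subst hu; rfl

end WittBounds

section Expand

variable {L : Type} [Field L] (D : DVField L)

lemma z_ne_zero : D.z ≠ 0 := by
  intro h
  have h2 := D.v_z
  rw [h, v_zero] at h2
  exact (by simp : (⊤ : WithTop ℤ) ≠ 1) h2

lemma expand (K : Subfield L) (hK : D.IsCoeffField K) :
    ∀ (k : ℕ) (x : L), ((-(k : ℤ) : ℤ) : WithTop ℤ) ≤ D.v x →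
    ∃ (N : ℕ) (μ : Fin N → L) (i : Fin N → ℤ),
      (∀ α, μ α ∈ K) ∧ (∀ α, -(k : ℤ) ≤ i α ∧ i α < 0) ∧
      0 ≤ D.v (x - ∑ α, μ α * D.z ^ i α) := by
  intro k
  induction k with
  | zero =>
      intro x hx
      refine ⟨0, Fin.elim0, Fin.elim0, fun α => α.elim0, fun α => α.elim0, ?_⟩
      rw [Finset.univ_eq_empty, Finset.sum_empty, sub_zero]
      simpa using hx
  | succ k ih =>
      intro x hx
      have hz := z_ne_zero D
      have hyv : 0 ≤ D.v (x * D.z ^ ((k : ℤ) + 1)) := by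
        rw [D.v_mul, v_zpow]
        calc (0 : WithTop ℤ) = ((-((k : ℕ) + 1 : ℕ) : ℤ) : WithTop ℤ)
              + (((k : ℤ) + 1 : ℤ) : WithTop ℤ) := by
              rw [← WithTop.coe_add,
                show (-((k : ℕ) + 1 : ℕ) : ℤ) + ((k : ℤ) + 1 : ℤ) = 0 by push_cast; ring,
                WithTop.coe_zero]
          _ ≤ D.v x + (((k : ℤ) + 1 : ℤ) : WithTop ℤ) := add_le_add hx le_rfl
      obtain ⟨μ0, hμ0K, hμ0⟩ := hK.2 _ hyv
      have hstep : ((-(k : ℤ) : ℤ) : WithTop ℤ) ≤ D.v (x - μ0 * D.z ^ (-(k : ℤ) - 1)) := by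
        have hrew : x - μ0 * D.z ^ (-(k : ℤ) - 1)
            = (x * D.z ^ ((k : ℤ) + 1) - μ0) * D.z ^ (-(k : ℤ) - 1) := by
          rw [sub_mul, mul_assoc, ← zpow_add₀ hz,
            show ((k : ℤ) + 1) + (-(k : ℤ) - 1) = 0 by ring, zpow_zero, mul_one]
        rw [hrew, D.v_mul, v_zpow]
        have h1le : ((1 : ℤ) : WithTop ℤ) ≤ D.v (x * D.z ^ ((k : ℤ) + 1) - μ0) := by
          exact_mod_cast hμ0
        calc ((-(k : ℤ) : ℤ) : WithTop ℤ)
            ≤ ((1 : ℤ) : WithTop ℤ) + ((-(k : ℤ) - 1 : ℤ) : WithTop ℤ) := by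
              rw [← WithTop.coe_add, WithTop.coe_le_coe]; omega
          _ ≤ D.v (x * D.z ^ ((k : ℤ) + 1) - μ0) + ((-(k : ℤ) - 1 : ℤ) : WithTop ℤ) :=
              add_le_add h1le le_rfl
      obtain ⟨N, μ, ii, hμK, hii, hrem⟩ := ih (x - μ0 * D.z ^ (-(k : ℤ) - 1)) hstep
      refine ⟨N + 1, Fin.cons μ0 μ, Fin.cons (-(k : ℤ) - 1) ii, ?_, ?_, ?_⟩
      · intro α
        refine Fin.cases ?_ ?_ α
        · simpa using hμ0K
        · intro β; simpa using hμK β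
      · intro α
        refine Fin.cases ?_ ?_ α
        · simp only [Fin.cons_zero]
          constructor
          · push_cast; omega
          · omega
        · intro β
          simp only [Fin.cons_succ]
          have h2 := hii β
          constructor
          · have := h2.1; push_cast; push_cast at this; omega
          · exact h2.2
      · have hsum : (∑ α : Fin (N + 1), (Fin.cons μ0 μ : Fin (N + 1) → L) α
              * D.z ^ ((Fin.cons (-(k : ℤ) - 1) ii : Fin (N + 1) → ℤ) α))
            = μ0 * D.z ^ (-(k : ℤ) - 1) + ∑ β : Fin N, μ β * D.z ^ ii β := by
          rw [Fin.sum_univ_succ]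
          simp only [Fin.cons_zero, Fin.cons_succ]
        rw [hsum, show x - (μ0 * D.z ^ (-(k : ℤ) - 1) + ∑ β : Fin N, μ β * D.z ^ ii β)
            = (x - μ0 * D.z ^ (-(k : ℤ) - 1)) - ∑ β : Fin N, μ β * D.z ^ ii β by ring]
        exact hrem

end Expand

section Main

variable {L : Type} [Field L] (D : DVField L) (p : ℕ) [Fact p.Prime] [CharP L p]

lemma main_decomp (K : Subfield L) (hK : D.IsCoeffField K) (r : ℕ) (n : ℕ) :
    ∀ X : WittVector p L,
      (∀ l : ℕ, ((-(sB p n r l) : ℤ) : WithTop ℤ) ≤ D.v (X.coeff l)) →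
      ∃ B : WittVector p L, (∀ l, 0 ≤ D.v (B.coeff l)) ∧
        ∃ (N : ℕ) (μ : Fin N → L) (m : Fin N → ℕ) (i : Fin N → ℤ),
          (∀ α, μ α ∈ K) ∧ (∀ α, 1 ≤ m α ∧ m α ≤ n) ∧
          (∀ α, -(r : ℤ) ≤ i α * (p : ℤ) ^ (m α - 1) ∧ i α * (p : ℤ) ^ (m α - 1) < 0) ∧
          WittVector.truncate n X =
            WittVector.truncate n B +
              ∑ α, (wVit (wT p (m α) (μ α * D.z ^ i α)) : TruncatedWittVector p n L) := by
  induction n with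
  | zero =>
      intro X _
      refine ⟨0, fun l => by rw [WittVector.zero_coeff, v_zero]; exact le_top,
        0, Fin.elim0, Fin.elim0, Fin.elim0, fun α => α.elim0, fun α => α.elim0,
        fun α => α.elim0, ?_⟩
      apply TruncatedWittVector.ext
      intro i
      exact i.elim0
  | succ n ih =>
      intro X hX
      have hppos : 0 < (p : ℤ) := by exact_mod_cast (Fact.out : p.Prime).pos
      have hX0 : ((-(((sB p (n + 1) r 0).toNat : ℕ) : ℤ) : ℤ) : WithTop ℤ) ≤ D.v (X.coeff 0) := by
        rw [Int.toNat_of_nonneg (sB_nonneg p (n + 1) r 0)]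
        exact hX 0
      obtain ⟨N₁, μ₁, i₁, hμ₁K, hi₁, hc⟩ :=
        expand D K hK (sB p (n + 1) r 0).toNat (X.coeff 0) hX0
      set c : L := X.coeff 0 - ∑ α, μ₁ α * D.z ^ i₁ α with hcdef
      set T : WittVector p L :=
        WittVector.teichmuller p c +
          ∑ α : Fin N₁, WittVector.teichmuller p (μ₁ α * D.z ^ i₁ α) with hTdef
      have hi₁' : ∀ α, -(sB p (n + 1) r 0) ≤ i₁ α ∧ i₁ α < 0 := by
        intro α
        have h2 := hi₁ α
        rw [Int.toNat_of_nonneg (sB_nonneg p (n + 1) r 0)] at h2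
        exact h2
      have hordz : ∀ α : Fin N₁,
          ((-(sB p (n + 1) r 0) : ℤ) : WithTop ℤ) ≤ D.v (μ₁ α * D.z ^ i₁ α) := by
        intro α
        rw [D.v_mul, v_zpow]
        calc ((-(sB p (n + 1) r 0) : ℤ) : WithTop ℤ) ≤ ((i₁ α : ℤ) : WithTop ℤ) :=
              WithTop.coe_le_coe.mpr (hi₁' α).1
          _ = 0 + ((i₁ α : ℤ) : WithTop ℤ) := (zero_add _).symm
          _ ≤ D.v (μ₁ α) + ((i₁ α : ℤ) : WithTop ℤ) :=
              add_le_add (hK.1 _ (hμ₁K α)) le_rfl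
      have hcb : ((-(sB p (n + 1) r 0) : ℤ) : WithTop ℤ) ≤ D.v c := by
        refine le_trans ?_ hc
        rw [show (0 : WithTop ℤ) = ((0 : ℤ) : WithTop ℤ) from rfl, WithTop.coe_le_coe]
        have := sB_nonneg p (n + 1) r 0
        omega
      have hTb : ∀ l, ((-(sB p (n + 1) r l) : ℤ) : WithTop ℤ) ≤ D.v (T.coeff l) := by
        intro l
        rw [hTdef]
        refine coeff_add_bound D p (n + 1) r _ _ (teich_bound D p (n + 1) r c hcb) ?_ l
        exact coeff_sum_bound D p (n + 1) r Finset.univ _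
          (fun α _ => teich_bound D p (n + 1) r _ (hordz α))
      have hXTb : ∀ l, ((-(sB p (n + 1) r l) : ℤ) : WithTop ℤ) ≤ D.v ((X - T).coeff l) := by
        intro l
        rw [sub_eq_add_neg]
        exact coeff_add_bound D p (n + 1) r _ _ hX
          (coeff_neg_bound D p (n + 1) r T hTb) l
      have hT0 : T.coeff 0 = X.coeff 0 := by
        rw [hTdef, WittVector.add_coeff_zero, WittVector.teichmuller_coeff_zero,
          sum_coeff_zero, hcdef]
        rw [Finset.sum_congr rfl
          (fun α _ => WittVector.teichmuller_coeff_zero p (μ₁ α * D.z ^ i₁ α))]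
        ring
      have hXT0 : (X - T).coeff 0 = 0 := by
        rw [sub_eq_add_neg, WittVector.add_coeff_zero, neg_coeff_zero, hT0]
        ring
      set Y : WittVector p L := WittVector.mk p (fun l => (X - T).coeff (l + 1)) with hYdef
      have hVY : WittVector.verschiebung Y = X - T := by
        apply WittVector.ext
        intro l
        cases l with
        | zero => rw [WittVector.verschiebung_coeff_zero, hXT0]
        | succ k => rw [WittVector.verschiebung_coeff_succ]; rfl
      have hYb : ∀ l, ((-(sB p n r l) : ℤ) : WithTop ℤ) ≤ D.v (Y.coeff l) := by
        intro l
        have h2 := hXTb (l + 1)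
        rw [sB_succ hppos] at h2
        exact h2
      obtain ⟨B', hB', N₂, μ₂, m₂, i₂, hμ₂K, hm₂, hi₂, heq₂⟩ := ih Y hYb
      refine ⟨WittVector.teichmuller p c + WittVector.verschiebung B', ?_, N₁ + N₂,
        Fin.append μ₁ μ₂, Fin.append (fun _ => n + 1) m₂, Fin.append i₁ i₂, ?_, ?_, ?_, ?_⟩
      · intro l
        have h0 := coeff_add_bound D p 0 0 (WittVector.teichmuller p c)
          (WittVector.verschiebung B')
          (fun l' => by
            rw [sB_zero]
            cases l' with
            | zero =>
                rw [WittVector.teichmuller_coeff_zero]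
                simpa using hc
            | succ k =>
                rw [WittVector.teichmuller_coeff_pos p c _ (Nat.succ_pos k), v_zero]
                exact le_top)
          (fun l' => by
            rw [sB_zero]
            cases l' with
            | zero =>
                rw [WittVector.verschiebung_coeff_zero, v_zero]
                exact le_top
            | succ k =>
                rw [WittVector.verschiebung_coeff_succ]
                simpa using hB' k) l
        rw [sB_zero] at h0
        simpa using h0
      · intro α
        refine Fin.addCases ?_ ?_ α
        · intro β; rw [Fin.append_left]; exact hμ₁K β
        · intro β; rw [Fin.append_right]; exact hμ₂K β
      · intro α
        refine Fin.addCases ?_ ?_ α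
        · intro β; rw [Fin.append_left]; omega
        · intro β; rw [Fin.append_right]; have := hm₂ β; omega
      · intro α
        refine Fin.addCases ?_ ?_ α
        · intro β
          rw [Fin.append_left, Fin.append_left]
          simp only [Nat.add_sub_cancel]
          have h1 := (hi₁' β).1
          have h2 := (hi₁' β).2
          have hsb : sB p (n + 1) r 0 = (r : ℤ) / (p : ℤ) ^ n := by
            have h3 := sB_eq hppos (n + 1) r 0 (by omega)
            simpa using h3
          constructor
          · calc -(r : ℤ) ≤ -((r : ℤ) / (p : ℤ) ^ n) * (p : ℤ) ^ n := by
                  rw [neg_mul]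
                  exact neg_le_neg (ediv_mul_le' (r : ℤ) ((p : ℤ) ^ n) (by positivity))
              _ ≤ i₁ β * (p : ℤ) ^ n := by
                  refine mul_le_mul_of_nonneg_right ?_ (by positivity)
                  rw [← hsb]
                  exact h1
          · exact mul_neg_of_neg_of_pos h2 (by positivity)
        · intro β
          rw [Fin.append_right, Fin.append_right]
          exact hi₂ β
      · have e1 : WittVector.truncate (n + 1) X
            = WittVector.truncate (n + 1) T + WittVector.truncate (n + 1) (X - T) := by
          rw [← map_add, show T + (X - T) = X by ring]
        have e2 : WittVector.truncate (n + 1) T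
            = wT p (n + 1) c + ∑ α : Fin N₁, wT p (n + 1) (μ₁ α * D.z ^ i₁ α) := by
          rw [hTdef, map_add, map_sum, trunc_teich]
          all_goals
            exact congrArg _ (Finset.sum_congr rfl fun α _ => trunc_teich p (n + 1) _)
        have e3 : WittVector.truncate (n + 1) (X - T)
            = WittVector.truncate (n + 1) (WittVector.verschiebung B')
              + ∑ α : Fin N₂, (wVit (wT p (m₂ α) (μ₂ α * D.z ^ i₂ α))
                  : TruncatedWittVector p (n + 1) L) := by
          rw [← hVY, trunc_versch, heq₂]
          calc (wVit (WittVector.truncate n B'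
                + ∑ α : Fin N₂, (wVit (wT p (m₂ α) (μ₂ α * D.z ^ i₂ α))
                    : TruncatedWittVector p n L)) : TruncatedWittVector p (n + 1) L)
              = wVitHom p n (WittVector.truncate n B')
                + ∑ α : Fin N₂, wVitHom p n
                    (wVit (wT p (m₂ α) (μ₂ α * D.z ^ i₂ α))) := by
                rw [show (wVit (WittVector.truncate n B'
                    + ∑ α : Fin N₂, (wVit (wT p (m₂ α) (μ₂ α * D.z ^ i₂ α))
                        : TruncatedWittVector p n L)) : TruncatedWittVector p (n + 1) L)
                    = wVitHom p n (WittVector.truncate n B'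
                      + ∑ α : Fin N₂, (wVit (wT p (m₂ α) (μ₂ α * D.z ^ i₂ α))
                          : TruncatedWittVector p n L)) from rfl, map_add, map_sum]
            _ = WittVector.truncate (n + 1) (WittVector.verschiebung B')
                + ∑ α : Fin N₂, (wVit (wT p (m₂ α) (μ₂ α * D.z ^ i₂ α))
                    : TruncatedWittVector p (n + 1) L) := by
                rw [show wVitHom p n (WittVector.truncate n B')
                    = (wVit (WittVector.truncate n B') : TruncatedWittVector p (n + 1) L)
                    from rfl, ← trunc_versch]
                congr 1
                refine Finset.sum_congr rfl fun α _ => ?_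
                exact wVit_wVit p (m₂ α) n (hm₂ α).2 _
        have esum : (∑ α : Fin (N₁ + N₂),
              (wVit (wT p (Fin.append (fun _ => n + 1) m₂ α)
                  (Fin.append μ₁ μ₂ α * D.z ^ Fin.append i₁ i₂ α))
                : TruncatedWittVector p (n + 1) L))
            = (∑ α : Fin N₁, wT p (n + 1) (μ₁ α * D.z ^ i₁ α))
              + ∑ α : Fin N₂, (wVit (wT p (m₂ α) (μ₂ α * D.z ^ i₂ α))
                  : TruncatedWittVector p (n + 1) L) := by
          rw [Fin.sum_univ_add]
          congr 1
          · refine Finset.sum_congr rfl fun α _ => ?_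
            have hM : Fin.append (fun _ => n + 1) m₂ (Fin.castAdd N₂ α) = n + 1 :=
              Fin.append_left _ _ _
            have hMu : Fin.append μ₁ μ₂ (Fin.castAdd N₂ α) = μ₁ α := Fin.append_left _ _ _
            have hI : Fin.append i₁ i₂ (Fin.castAdd N₂ α) = i₁ α := Fin.append_left _ _ _
            calc (wVit (wT p (Fin.append (fun _ => n + 1) m₂ (Fin.castAdd N₂ α))
                    (Fin.append μ₁ μ₂ (Fin.castAdd N₂ α)
                      * D.z ^ Fin.append i₁ i₂ (Fin.castAdd N₂ α)))
                  : TruncatedWittVector p (n + 1) L)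
                = wVit (wT p (n + 1) (μ₁ α * D.z ^ i₁ α)) :=
                  wVit_wT_congr p hM (by rw [hMu, hI])
              _ = wT p (n + 1) (μ₁ α * D.z ^ i₁ α) := wVit_self p (n + 1) _
          · refine Finset.sum_congr rfl fun α _ => ?_
            have hM : Fin.append (fun _ => n + 1) m₂ (Fin.natAdd N₁ α) = m₂ α :=
              Fin.append_right _ _ _
            have hMu : Fin.append μ₁ μ₂ (Fin.natAdd N₁ α) = μ₂ α := Fin.append_right _ _ _
            have hI : Fin.append i₁ i₂ (Fin.natAdd N₁ α) = i₂ α := Fin.append_right _ _ _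
            exact wVit_wT_congr p hM (by rw [hMu, hI])
        rw [e1, e2, e3, map_add, trunc_teich, esum]
        abel

end Main

end Statement7Aux

/-- (Explicit presentation of the Brylinski–Kato filtration modulo integral
Witt vectors.)  If `O` admits a coefficient field `K ⊆ O`, then for every `r ≥ 1` and `n ≥ 1`,
every `a ∈ fil^log_r Wₙ(L)` can be written as `a = b + Σ_α V^{j_α}([μ_α · z^{i_α}])` with
`b ∈ Wₙ(O)`, `μ_α ∈ K`, `0 ≤ j_α ≤ n-1` and `-r ≤ i_α · p^{n-1-j_α} < 0`. -/
theorem statement7 (p : ℕ) [Fact p.Prime] (L : Type) [Field L] [CharP L p]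
    (D : DVField L) (K : Subfield L) (hK : D.IsCoeffField K)
    (r n : ℕ) (hr : 1 ≤ r) (hn : 1 ≤ n)
    (a : TruncatedWittVector p n L) (ha : a ∈ D.filLog p r n) :
    ∃ b ∈ D.WO p n, ∃ (N : ℕ) (μ : Fin N → L) (j : Fin N → ℕ) (i : Fin N → ℤ),
      (∀ α, μ α ∈ K) ∧ (∀ α, j α ≤ n - 1) ∧
      (∀ α, -(r : ℤ) ≤ i α * (p : ℤ) ^ (n - 1 - j α) ∧ i α * (p : ℤ) ^ (n - 1 - j α) < 0) ∧
      a = b + ∑ α : Fin N,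
        (wVit (wT p (n - j α) (μ α * D.z ^ (i α))) : TruncatedWittVector p n L) := by
  have hppos : 0 < (p : ℤ) := by exact_mod_cast (Fact.out : p.Prime).pos
  set X : WittVector p L := WittVector.mk p
    (fun l => if h : l < n then a.coeff ⟨l, h⟩ else 0) with hXdef
  have htr : WittVector.truncate n X = a := by
    apply TruncatedWittVector.ext
    intro i
    rw [WittVector.coeff_truncate]
    show (if h : (i : ℕ) < n then a.coeff ⟨(i : ℕ), h⟩ else 0) = a.coeff i
    rw [dif_pos i.isLt]
  have hXb : ∀ l, ((-(Statement7Aux.sB p n r l) : ℤ) : WithTop ℤ) ≤ D.v (X.coeff l) := by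
    intro l
    show _ ≤ D.v (if h : l < n then a.coeff ⟨l, h⟩ else 0)
    by_cases h : l < n
    · rw [dif_pos h]
      have ha2 : (↑(-(r : ℤ)) : WithTop ℤ) ≤ p ^ (n - 1 - l) • D.v (a.coeff ⟨l, h⟩) :=
        ha ⟨l, h⟩
      by_cases hvt : D.v (a.coeff ⟨l, h⟩) = ⊤
      · rw [hvt]; exact le_top
      · obtain ⟨m, hm⟩ := WithTop.ne_top_iff_exists.mp hvt
        rw [← hm] at ha2 ⊢
        rw [← Statement7Aux.coe_nsmul, WithTop.coe_le_coe, nsmul_eq_mul] at ha2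
        push_cast at ha2
        rw [WithTop.coe_le_coe]
        have hsb : Statement7Aux.sB p n r l = (r : ℤ) / (p : ℤ) ^ (n - 1 - l) := by
          rw [Statement7Aux.sB_eq hppos n r l (by omega)]
          congr 2
          omega
        rw [hsb]
        exact Statement7Aux.neg_ediv_le _ _ _ (by positivity) (by linarith [ha2])
    · rw [dif_neg h, Statement7Aux.v_zero D]
      exact le_top
  obtain ⟨B, hB, N, μ, m, i, hμ, hm, hi, heq⟩ :=
    Statement7Aux.main_decomp D p K hK r n X hXb
  refine ⟨WittVector.truncate n B, fun ifin => ?_, N, μ, (fun α => n - m α), i, hμ, ?_, ?_, ?_⟩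
  · rw [WittVector.coeff_truncate]
    exact hB _
  · intro α
    show n - m α ≤ n - 1
    have := hm α
    omega
  · intro α
    show -(r : ℤ) ≤ i α * (p : ℤ) ^ (n - 1 - (n - m α)) ∧
      i α * (p : ℤ) ^ (n - 1 - (n - m α)) < 0
    have h2 : n - 1 - (n - m α) = m α - 1 := by have := hm α; omega
    rw [h2]
    exact hi α
  · rw [← htr, heq]
    congr 1
    refine Finset.sum_congr rfl fun α _ => ?_
    exact Statement7Aux.wVit_wT_congr p (show m α = n - (n - m α) by have := hm α; omega) rfl
end
end

section
/- (Weight-zero case of the paper's Lemma computing the restriction of the p-saturated filtration.) For all n ≥ 0 and r ≥ 1, the image of Fil^p_r W_{n+1}(L) under the n-fold restriction Rⁿ : W_{n+1}(L) → W_1(L) = L (i.e. the set of 0-th components a_0 of elements of Fil^p_r W_{n+1}(L)) equals: 𝔪^{−⌈r/pⁿ⌉+1} = {a ∈ L : v(a) ≥ 1 − ⌈r/pⁿ⌉} if v_p(r) ≤ n, and 𝔪^{−r/pⁿ} = {a ∈ L : v(a) ≥ −r/pⁿ} if v_p(r) ≥ n+1 (here ⌈·⌉ is the ceiling and v_p(r)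 the p-adic valuation of r). -/
noncomputable section

open scoped Classical

/-! ### Auxiliary lemmas -/

private lemma nsmul_top_eq (k : ℕ) (hk : 0 < k) : k • (⊤ : WithTop ℤ) = ⊤ := by
  obtain ⟨m, rfl⟩ := Nat.exists_eq_succ_of_ne_zero hk.ne'
  rw [succ_nsmul]
  simp

private lemma hdiv_aux (P t : ℕ) (hP : 0 < P) (k : ℤ) :
    -(t : ℤ) ≤ (P : ℤ) * k ↔ -((t / P : ℕ) : ℤ) ≤ k := by
  have h1 : ((t / P : ℕ) : ℤ) = (t : ℤ) / (P : ℤ) := by exact_mod_cast (Int.natCast_ediv t P)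
  have hP' : (0 : ℤ) < (P : ℤ) := by exact_mod_cast hP
  have h2 : (-k ≤ (t : ℤ) / (P : ℤ)) ↔ -k * P ≤ t := Int.le_ediv_iff_mul_le hP'
  constructor
  · intro h
    rw [neg_le, h1, h2]
    linarith
  · intro h
    rw [neg_le, h1, h2] at h
    linarith

private lemma bound_iff {L : Type} [Field L] (D : DVField L) (P t : ℕ) (hP : 0 < P) (c : L) :
    ((↑(-(t : ℤ)) : WithTop ℤ) ≤ P • D.v c) ↔
      ((↑(-((t / P : ℕ) : ℤ)) : WithTop ℤ) ≤ D.v c) := by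
  cases hv : D.v c with
  | top =>
    rw [nsmul_top_eq P hP]
    simp
  | coe k =>
    rw [← WithTop.coe_nsmul, WithTop.coe_le_coe, WithTop.coe_le_coe, nsmul_eq_mul]
    exact hdiv_aux P t hP k

/-- `coeff 0` as an additive monoid hom on truncated Witt vectors of positive length. -/
private def coeff0 (p : ℕ) [Fact p.Prime] {L : Type} [Field L] (n : ℕ) :
    TruncatedWittVector p (n + 1) L →+ L where
  toFun x := x.coeff 0
  map_zero' := TruncatedWittVector.coeff_zero p (n + 1) L 0
  map_add' x y := by
    show (WittVector.truncateFun (n + 1) (x.out + y.out)).coeff 0 = x.coeff 0 + y.coeff 0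
    rw [WittVector.coeff_truncateFun]
    rw [← TruncatedWittVector.coeff_out x 0, ← TruncatedWittVector.coeff_out y 0]
    simpa using WittVector.add_coeff_zero x.out y.out

private lemma wVit_zero {p : ℕ} {L : Type} [Field L] [Fact p.Prime] {m k : ℕ} :
    wVit (0 : TruncatedWittVector p m L) = (0 : TruncatedWittVector p k L) := by
  apply TruncatedWittVector.ext
  intro i
  rw [wVit, TruncatedWittVector.coeff_mk, TruncatedWittVector.coeff_zero]
  split <;> simp [TruncatedWittVector.coeff_zero]

private lemma zero_mem_filLog {L : Type} [Field L] (D : DVField L) (p : ℕ) [Fact p.Prime] (hp : 0 < p)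
    (t m : ℕ) : (0 : TruncatedWittVector p m L) ∈ D.filLog p t m := by
  intro i
  rw [TruncatedWittVector.coeff_zero, (D.v_top 0).mpr rfl, nsmul_top_eq _ (pow_pos hp _)]
  exact le_top

private lemma zero_mem_filKM {L : Type} [Field L] (D : DVField L) (p : ℕ) [Fact p.Prime]
    (hp : 0 < p) (t m : ℕ) : (0 : TruncatedWittVector p m L) ∈ D.filKM p t m := by
  rw [DVField.filKM]
  split
  · intro i
    rw [TruncatedWittVector.coeff_zero, (D.v_top 0).mpr rfl]
    exact le_top
  · exact ⟨0, zero_mem_filLog D p hp _ _, 0, zero_mem_filLog D p hp _ _,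
      by rw [wVit_zero, add_zero]⟩

private lemma wT_mem_filLog {L : Type} [Field L] (D : DVField L) (p : ℕ) (hp : 0 < p)
    (t m : ℕ) (c : L) (hc : (↑(-(t : ℤ)) : WithTop ℤ) ≤ p ^ (m - 1) • D.v c) :
    wT p m c ∈ D.filLog p t m := by
  intro i
  rw [wT, TruncatedWittVector.coeff_mk]
  split
  · rename_i h
    rw [h, Nat.sub_zero]
    exact hc
  · rw [(D.v_top 0).mpr rfl, nsmul_top_eq _ (pow_pos hp _)]
    exact le_top

private lemma coeff0_psum (p : ℕ) [Fact p.Prime] {L : Type} [Field L] [CharP L p] (n : ℕ)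
    (f : Fin (n + 1) → TruncatedWittVector p (n + 1) L) :
    (∑ s : Fin (n + 1), p ^ (s : ℕ) • f s).coeff (0 : Fin (n + 1)) = (f 0).coeff 0 := by
  have step : ∀ s : Fin (n + 1), coeff0 p n (p ^ (s : ℕ) • f s) =
      if s = 0 then (f 0).coeff (0 : Fin (n + 1)) else 0 := by
    intro s
    rw [map_nsmul, nsmul_eq_mul]
    by_cases hs : s = 0
    · subst hs
      simp [coeff0]
    · have hs' : (s : ℕ) ≠ 0 := fun h => hs (Fin.ext h)
      have hp0 : ((p ^ (s : ℕ) : ℕ) : L) = 0 := by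
        push_cast
        rw [CharP.cast_eq_zero L p, zero_pow hs']
      rw [hp0, zero_mul, if_neg hs]
  calc (∑ s : Fin (n + 1), p ^ (s : ℕ) • f s).coeff (0 : Fin (n + 1))
      = coeff0 p n (∑ s : Fin (n + 1), p ^ (s : ℕ) • f s) := rfl
    _ = ∑ s : Fin (n + 1), coeff0 p n (p ^ (s : ℕ) • f s) := map_sum _ _ _
    _ = ∑ s : Fin (n + 1), if s = 0 then (f 0).coeff (0 : Fin (n + 1)) else 0 :=
        Finset.sum_congr rfl fun s _ => step s
    _ = (f 0).coeff 0 := by rw [Finset.sum_ite_eq' Finset.univ 0]; simp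

private lemma wVit_coeff0 {p : ℕ} [Fact p.Prime] {L : Type} [Field L] {n : ℕ}
    (b : TruncatedWittVector p (n + 1) L) :
    (wVit b : TruncatedWittVector p (n + 1) L).coeff (0 : Fin (n + 1)) = b.coeff 0 := by
  rw [wVit, TruncatedWittVector.coeff_mk]
  rw [dif_pos (by constructor <;> simp)]
  congr 1
  apply Fin.ext
  simp

/-- (Weight-zero restriction of the `p`-saturated filtration.)  For all
`n ≥ 0` and `r ≥ 1`, the image of `Fil^p_r W_{n+1}(L)` under `Rⁿ : W_{n+1}(L) → W₁(L) = L`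
(the set of `0`-th components) equals `𝔪^{-⌈r/pⁿ⌉+1}` if `v_p(r) ≤ n`, and `𝔪^{-r/pⁿ}` if
`v_p(r) ≥ n+1`.  (Here `⌈r/pⁿ⌉ = (r + pⁿ - 1)/pⁿ` as natural numbers.) -/
theorem statement8 (p : ℕ) [Fact p.Prime] (L : Type) [Field L] [CharP L p]
    (D : DVField L) (n r : ℕ) (hr : 1 ≤ r) :
    {a : L | ∃ x ∈ D.FilP p r (n + 1), x.coeff (0 : Fin (n + 1)) = a} =
      if padicValNat p r ≤ n then
        {a : L | (↑(1 - (((r + p ^ n - 1) / p ^ n : ℕ) : ℤ)) : WithTop ℤ) ≤ D.v a}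
      else
        {a : L | (↑(-((r / p ^ n : ℕ) : ℤ)) : WithTop ℤ) ≤ D.v a} := by
  have hp : 0 < p := (Fact.out : p.Prime).pos
  have hP : 0 < p ^ n := pow_pos hp n
  have hr0 : r ≠ 0 := by omega
  have hceil : (r + p ^ n - 1) / p ^ n = (r - 1) / p ^ n + 1 := by
    have h : r + p ^ n - 1 = (r - 1) + p ^ n := by omega
    rw [h, Nat.add_div_right _ hP]
  have hint : (1 - (((r + p ^ n - 1) / p ^ n : ℕ) : ℤ)) = -(((r - 1) / p ^ n : ℕ) : ℤ) := by
    rw [hceil]; push_cast; ring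
  ext c
  have key : (∃ x ∈ D.FilP p r (n + 1), x.coeff (0 : Fin (n + 1)) = c) ↔
      (∃ y ∈ D.filKM p r (n + 1), y.coeff (0 : Fin (n + 1)) = c) := by
    constructor
    · rintro ⟨x, ⟨f, hf, rfl⟩, rfl⟩
      refine ⟨f 0, ?_, (coeff0_psum p n f).symm⟩
      have h0 := hf 0
      simpa using h0
    · rintro ⟨y, hy, rfl⟩
      refine ⟨∑ s : Fin (n + 1), p ^ (s : ℕ) • (if s = 0 then y else 0),
        ⟨fun s => if s = 0 then y else 0, fun s => ?_, rfl⟩, ?_⟩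
      · by_cases hs : s = 0
        · subst hs; simpa using hy
        · show (if s = 0 then y else 0) ∈ D.filKM p (r * p ^ (s : ℕ)) (n + 1)
          rw [if_neg hs]; exact zero_mem_filKM D p hp _ _
      · rw [coeff0_psum]; simp
  by_cases hv : padicValNat p r ≤ n
  · rw [if_pos hv]
    simp only [Set.mem_setOf_eq]
    rw [key]
    simp only [DVField.filKM, if_neg hr0, Set.mem_setOf_eq]
    constructor
    · rintro ⟨y, ⟨a, ha, b, hb, rfl⟩, rfl⟩
      have hadd := (coeff0 p n).map_add a (wVit b)
      have hw0 : (wVit b : TruncatedWittVector p (n + 1) L).coeff (0 : Fin (n + 1)) = 0 := by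
        rw [wVit, TruncatedWittVector.coeff_mk, dif_neg]
        intro hcon
        have h1 := hcon.1
        simp only [Fin.val_zero] at h1
        omega
      have ha0 := ha 0
      simp only [Fin.val_zero, Nat.add_sub_cancel, Nat.sub_zero] at ha0
      rw [bound_iff D (p ^ n) (r - 1) hP] at ha0
      show (↑(1 - (((r + p ^ n - 1) / p ^ n : ℕ) : ℤ)) : WithTop ℤ) ≤ _
      have hadd' : TruncatedWittVector.coeff (0 : Fin (n + 1)) (a + wVit b) =
          TruncatedWittVector.coeff 0 a + TruncatedWittVector.coeff 0 (wVit b) := hadd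
      rw [hint, hadd', hw0, add_zero]
      exact ha0
    · intro hc
      rw [hint] at hc
      have hbd : (↑(-((r - 1 : ℕ) : ℤ)) : WithTop ℤ) ≤ p ^ ((n + 1) - 1) • D.v c := by
        rw [show (n + 1) - 1 = n from rfl, bound_iff D (p ^ n) (r - 1) hP]
        exact hc
      refine ⟨wT p (n + 1) c, ⟨wT p (n + 1) c, wT_mem_filLog D p hp (r - 1) (n + 1) c hbd,
        0, zero_mem_filLog D p hp _ _, by rw [wVit_zero, add_zero]⟩, ?_⟩
      rw [wT, TruncatedWittVector.coeff_mk]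
      simp
  · rw [if_neg hv]
    simp only [Set.mem_setOf_eq]
    rw [key]
    have hm : min (padicValNat p r) (n + 1) = n + 1 := min_eq_right (by omega)
    simp only [DVField.filKM, if_neg hr0, Set.mem_setOf_eq]
    rw [hm]
    constructor
    · rintro ⟨y, ⟨a, ha, b, hb, rfl⟩, rfl⟩
      have hadd := (coeff0 p n).map_add a (wVit b)
      have ha0 := ha 0
      simp only [Fin.val_zero, Nat.add_sub_cancel, Nat.sub_zero] at ha0
      rw [bound_iff D (p ^ n) (r - 1) hP] at ha0
      have hb0 := hb 0
      simp only [Fin.val_zero, Nat.add_sub_cancel, Nat.sub_zero] at hb0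
      rw [bound_iff D (p ^ n) r hP] at hb0
      have hmono : (↑(-((r / p ^ n : ℕ) : ℤ)) : WithTop ℤ) ≤
          (↑(-(((r - 1) / p ^ n : ℕ) : ℤ)) : WithTop ℤ) := by
        rw [WithTop.coe_le_coe, neg_le_neg_iff]
        exact_mod_cast Nat.div_le_div_right (Nat.sub_le r 1)
      have ha0' : (↑(-((r / p ^ n : ℕ) : ℤ)) : WithTop ℤ) ≤ D.v (a.coeff 0) :=
        le_trans hmono ha0
      have hadd' : TruncatedWittVector.coeff (0 : Fin (n + 1)) (a + wVit b) =
          TruncatedWittVector.coeff 0 a + TruncatedWittVector.coeff 0 (wVit b) := hadd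
      rw [hadd', wVit_coeff0]
      exact le_trans (le_min ha0' hb0) (D.v_add _ _)
    · intro hc
      have hbd : (↑(-((r : ℕ) : ℤ)) : WithTop ℤ) ≤ p ^ ((n + 1) - 1) • D.v c := by
        rw [show (n + 1) - 1 = n from rfl, bound_iff D (p ^ n) r hP]
        exact hc
      refine ⟨wVit (wT p (n + 1) c), ⟨0, zero_mem_filLog D p hp _ _, wT p (n + 1) c,
        wT_mem_filLog D p hp r (n + 1) c hbd, (zero_add _).symm⟩, ?_⟩
      rw [wVit_coeff0, wT, TruncatedWittVector.coeff_mk]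
      simp
end
end

section
/- (Divisibility of exact forms; a case in the proof of Lemma lem:dzeros in §8.) Let k be a perfect field of characteristic p, R a smooth k-algebra, r ≥ 0 an integer, and a ∈ R[t]. If the differential da ∈ Ω¹_{R[t]/k} lies in t^{pr}·Ω¹_{R[t]/k}, then there exists c ∈ R[t] such that da = d(t^{pr}·c). -/
noncomputable section

open Polynomial

/-- Auxiliary: a polynomial `l` of degree `< n` whose differential in `Ω[R[X]⁄k]` is
divisible by `X^n` has zero differential. -/
theorem statement16_aux (k : Type) [Field k]
    (R : Type) [CommRing R] [Algebra k R] [Nontrivial R]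
    (n : ℕ) (l : Polynomial R) (hdeg : l.degree < (n : ℕ))
    (w : Ω[Polynomial R⁄k])
    (hDl : KaehlerDifferential.D k (Polynomial R) l = (X : Polynomial R) ^ n • w) :
    KaehlerDifferential.D k (Polynomial R) l = 0 := by
  classical
  -- the coefficientwise differential of `l` vanishes
  have hmc : (KaehlerDifferential.D k R).mapCoeffs l = 0 := by
    set Ψ := ((KaehlerDifferential.D k R).mapCoeffs).liftKaehlerDifferential with hΨ
    have h1 : (KaehlerDifferential.D k R).mapCoeffs l = (X : Polynomial R) ^ n • (Ψ w) := by
      have := congrArg Ψ hDl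
      rwa [Derivation.liftKaehlerDifferential_comp_D, map_smul] at this
    refine PolynomialModule.ext (Finsupp.ext fun i => ?_)
    by_cases hi : i < n
    · rw [h1, X_pow_eq_monomial]
      have := PolynomialModule.monomial_smul_apply n (1 : R) (Ψ w) i
      rw [this, if_neg (by omega)]
      rfl
    · show (KaehlerDifferential.D k R) (l.coeff i) = 0
      rw [coeff_eq_zero_of_degree_lt (lt_of_lt_of_le hdeg (by exact_mod_cast Nat.le_of_not_lt hi)),
        map_zero]
  -- the `dX`-component (the usual derivative) of `l` vanishes
  have hd0 : derivative l = 0 := by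
    set Ψ₂ : Ω[Polynomial R⁄k] →ₗ[Polynomial R] Polynomial R :=
      (KaehlerDifferential.polynomialEquiv R).toLinearMap.comp
        (KaehlerDifferential.map k R (Polynomial R) (Polynomial R)) with hΨ₂
    have h2 : derivative l = (X : Polynomial R) ^ n * (Ψ₂ w) := by
      have := congrArg Ψ₂ hDl
      rw [map_smul] at this
      rw [smul_eq_mul] at this
      rw [← this, hΨ₂]
      simp [KaehlerDifferential.map_D]
    by_cases hw : Ψ₂ w = 0
    · rw [h2, hw, mul_zero]
    · exfalso
      have hdd : (derivative l).degree < (n : ℕ) :=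
        lt_of_le_of_lt (degree_derivative_le) hdeg
      have hmul : ((X : Polynomial R) ^ n * (Ψ₂ w)).degree = (n : ℕ) + (Ψ₂ w).degree := by
        rw [mul_comm, (monic_X_pow n).degree_mul, degree_X_pow, add_comm]
      rw [h2, hmul] at hdd
      have h0 : (0 : WithBot ℕ) ≤ (Ψ₂ w).degree := zero_le_degree_iff.mpr hw
      have hle : ((n : ℕ) : WithBot ℕ) ≤ (n : ℕ) + (Ψ₂ w).degree :=
        le_add_of_nonneg_right h0
      exact absurd (lt_of_le_of_lt hle hdd) (lt_irrefl _)
  -- reassemble using the chain rule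
  have key := Derivation.apply_aeval_eq' (KaehlerDifferential.D k R)
    (KaehlerDifferential.D k (Polynomial R))
    (KaehlerDifferential.map k k R (Polynomial R))
    (fun a => KaehlerDifferential.map_D k k R (Polynomial R) a)
    (X : Polynomial R) l
  rw [aeval_X_left_apply, hmc, hd0] at key
  simpa using key

/-- (Divisibility of exact forms.)  Let `k` be a perfect field of
characteristic `p`, `R` a smooth `k`-algebra, `r ≥ 0` and `a ∈ R[t]`.  If
`d a ∈ t^{pr} · Ω¹_{R[t]/k}` then there exists `c ∈ R[t]` with `d a = d(t^{pr} · c)`. -/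
theorem statement16 (p : ℕ) (hp : p.Prime)
    (k : Type) [Field k] [CharP k p] [PerfectField k]
    (R : Type) [CommRing R] [Algebra k R] [Algebra.Smooth k R]
    (r : ℕ) (a : Polynomial R)
    (h : ∃ ω : Ω[Polynomial R⁄k], KaehlerDifferential.D k (Polynomial R) a =
        (Polynomial.X : Polynomial R) ^ (p * r) • ω) :
    ∃ c : Polynomial R, KaehlerDifferential.D k (Polynomial R) a =
      KaehlerDifferential.D k (Polynomial R) ((Polynomial.X : Polynomial R) ^ (p * r) * c) := by
  classical
  obtain ⟨ω, hω⟩ := h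
  rcases subsingleton_or_nontrivial R with hsub | hnt
  · have : Subsingleton (Ω[Polynomial R⁄k]) := Module.subsingleton (Polynomial R) _
    exact ⟨0, Subsingleton.elim _ _⟩
  set n := p * r with hn
  have hmono : ((X : Polynomial R) ^ n).Monic := monic_X_pow n
  set c := a /ₘ ((X : Polynomial R) ^ n) with hc
  set l := a %ₘ ((X : Polynomial R) ^ n) with hl
  have hal : (X : Polynomial R) ^ n * c + l = a := by
    rw [hc, hl, add_comm]; exact modByMonic_add_div a ((X : Polynomial R) ^ n)
  refine ⟨c, ?_⟩
  have hpR : (p : Polynomial R) = 0 := by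
    have h1 : (p : k) = 0 := CharP.cast_eq_zero k p
    calc (p : Polynomial R) = algebraMap k (Polynomial R) (p : k) := by rw [map_natCast]
    _ = 0 := by rw [h1, map_zero]
  have hDXn : KaehlerDifferential.D k (Polynomial R) ((X : Polynomial R) ^ n) = 0 := by
    rw [Derivation.leibniz_pow, ← Nat.cast_smul_eq_nsmul (Polynomial R)]
    have hzero : ((n : ℕ) : Polynomial R) = 0 := by
      rw [hn]; push_cast; rw [hpR]; ring
    rw [hzero, zero_smul]
  have hXnc : KaehlerDifferential.D k (Polynomial R) ((X : Polynomial R) ^ n * c)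
      = ((X : Polynomial R) ^ n) • KaehlerDifferential.D k (Polynomial R) c := by
    rw [Derivation.leibniz, hDXn, smul_zero, add_zero]
  have hDl : KaehlerDifferential.D k (Polynomial R) l
      = ((X : Polynomial R) ^ n) • (ω - KaehlerDifferential.D k (Polynomial R) c) := by
    have h3 := congrArg (KaehlerDifferential.D k (Polynomial R)) hal
    rw [map_add, hXnc, hω] at h3
    rw [smul_sub, ← h3]
    abel
  have hdeg : l.degree < (n : ℕ) := by
    have := degree_modByMonic_lt a hmono
    rwa [degree_X_pow] at this
  have hz := statement16_aux k R n l hdeg _ hDl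
  rw [← hal, map_add, hz, add_zero, hXnc]
end
end

section
/- (Weight-zero case of the key step in Lemma lem:KerFnFnd-mod, §9.) Assume O is henselian and admits a coefficient field K ⊆ O (e.g. O = K[[z]]). Then for all integers r ≥ 0 and n ≥ 1: p̲(Wₙ(L)) ∩ Fil^p_r W_{n+1}(L) = p̲(Fil^p_r Wₙ(L)); equivalently, if x ∈ Wₙ(L) satisfies p̲(x) ∈ Fil^p_r W_{n+1}(L), then x ∈ Fil^p_r Wₙ(L). -/
noncomputable section

open scoped Classical

open WittVector

section TeichMul
variable {p : ℕ} [hp : Fact p.Prime]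

private theorem teich_mul_coeff_aux₁ {R : Type*} [CommRing R] [Invertible (p : R)]
    (a : R) (x : WittVector p R) :
    teichmuller p a * x = WittVector.mk p (fun i => a ^ p ^ i * x.coeff i) := by
  apply (ghostMap.bijective_of_invertible p R).1
  rw [RingHom.map_mul]
  ext n
  simp only [Pi.mul_apply, ghostMap_apply]
  rw [ghostComponent_teichmuller]
  simp only [ghostComponent_apply, aeval_wittPolynomial, WittVector.coeff_mk]
  rw [Finset.mul_sum]
  refine Finset.sum_congr rfl ?_
  intro i hi
  rw [Finset.mem_range] at hi
  have h2 : p ^ i * p ^ (n - i) = p ^ n := by rw [← pow_add]; congr 1; omega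
  rw [mul_pow, ← pow_mul, h2]
  ring

private theorem teich_mul_coeff_aux₂ {S : Type*} (a : MvPolynomial S ℤ)
    (x : WittVector p (MvPolynomial S ℤ)) :
    teichmuller p a * x = WittVector.mk p (fun i => a ^ p ^ i * x.coeff i) := by
  have : Invertible (p : MvPolynomial S ℚ) := by
    have : Invertible (p : ℚ) := invertibleOfNonzero (by exact_mod_cast hp.out.ne_zero)
    exact Invertible.map (algebraMap ℚ (MvPolynomial S ℚ)) (p : ℚ) |>.copy _ (by simp)
  refine map_injective (MvPolynomial.map (Int.castRingHom ℚ))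
    (MvPolynomial.map_injective _ Int.cast_injective) ?_
  rw [RingHom.map_mul, map_teichmuller, teich_mul_coeff_aux₁]
  apply WittVector.ext
  intro n
  simp [WittVector.map_coeff, WittVector.coeff_mk]

theorem teich_mul_coeff {R : Type*} [CommRing R] (a : R) (x : WittVector p R) (i : ℕ) :
    (teichmuller p a * x).coeff i = a ^ p ^ i * x.coeff i := by
  obtain ⟨a₀, rfl⟩ := MvPolynomial.counit_surjective R a
  obtain ⟨x₀, hx₀⟩ : ∃ x₀, map (MvPolynomial.counit R) x₀ = x := by
    refine ⟨WittVector.mk p (fun n => Classical.choose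
      (MvPolynomial.counit_surjective R (x.coeff n))), ?_⟩
    apply WittVector.ext
    intro n
    rw [WittVector.map_coeff, WittVector.coeff_mk]
    exact Classical.choose_spec (MvPolynomial.counit_surjective R (x.coeff n))
  subst hx₀
  rw [← map_teichmuller, ← RingHom.map_mul, teich_mul_coeff_aux₂, WittVector.map_coeff,
    WittVector.coeff_mk, WittVector.map_coeff]
  simp
end TeichMul

/-! ### Auxiliary development -/

section Aux

open WittVector

variable {p : ℕ} [hp : Fact p.Prime] {L : Type} [Field L] [CharP L p]

section VBasics
variable (D : DVField L)

theorem DVField.v_one : D.v 1 = 0 := by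
  have h := D.v_mul 1 1
  rw [mul_one] at h
  cases hv : D.v 1 with
  | top => exact absurd ((D.v_top 1).mp hv) one_ne_zero
  | coe t =>
    rw [hv, ← WithTop.coe_add, WithTop.coe_inj] at h
    have ht : t = 0 := by omega
    rw [ht]; rfl

theorem DVField.v_negone : D.v (-1) = 0 := by
  have h := D.v_mul (-1) (-1)
  rw [neg_mul_neg, one_mul, D.v_one] at h
  cases hv : D.v (-1) with
  | top => exact absurd ((D.v_top (-1)).mp hv) (by norm_num)
  | coe t =>
    rw [hv, ← WithTop.coe_add] at h
    have ht : t = 0 := by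
      have h2 : (0 : ℤ) = t + t := by exact_mod_cast h
      omega
    rw [ht]; rfl

theorem DVField.v_neg (a : L) : D.v (-a) = D.v a := by
  have h := D.v_mul (-1) a
  rw [neg_one_mul, D.v_negone, zero_add] at h
  exact h

theorem DVField.v_zero' : D.v 0 = ⊤ := (D.v_top 0).mpr rfl

theorem DVField.v_pow (a : L) (m : ℕ) : D.v (a ^ m) = m • D.v a := by
  induction m with
  | zero => simp [D.v_one]
  | succ k ih =>
    rw [pow_succ, D.v_mul, ih, succ_nsmul]

theorem DVField.v_zpowN (m : ℕ) : D.v (D.z ^ m) = ((m : ℤ) : WithTop ℤ) := by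
  rw [D.v_pow, D.v_z]
  induction m with
  | zero => simp
  | succ k ih =>
    rw [succ_nsmul, ih, ← WithTop.coe_one, ← WithTop.coe_add]
    norm_num

/-- The valuation ring as a subring. -/
def DVField.Oring : Subring L where
  carrier := {a | 0 ≤ D.v a}
  one_mem' := by simp [D.v_one]
  mul_mem' := by
    intro a b ha hb
    simp only [Set.mem_setOf_eq, D.v_mul] at *
    exact add_nonneg ha hb
  add_mem' := by
    intro a b ha hb
    refine le_trans ?_ (D.v_add a b)
    exact le_min ha hb
  zero_mem' := by simp [D.v_zero']
  neg_mem' := by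
    intro a ha
    simpa only [Set.mem_setOf_eq, D.v_neg] using ha

end VBasics

theorem nsmul_coe_withtop (m : ℕ) (t : ℤ) :
    m • ((t : ℤ) : WithTop ℤ) = (((m : ℤ) * t : ℤ) : WithTop ℤ) := by
  induction m with
  | zero => simp
  | succ k ih =>
    rw [succ_nsmul, ih, ← WithTop.coe_add, WithTop.coe_inj]
    push_cast
    ring

theorem nsmul_top_withtop (m : ℕ) (hm : m ≠ 0) : m • (⊤ : WithTop ℤ) = ⊤ := by
  cases m with
  | zero => omega
  | succ k =>
    rw [succ_nsmul]
    exact add_top _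

/-- The `p^e`-power Frobenius ring endomorphism of `L`. -/
def frobLe (p : ℕ) [Fact p.Prime] (L : Type) [Field L] [CharP L p] (e : ℕ) : L →+* L :=
  RingHom.mk' (powMonoidHom (p ^ e)) (fun a b => add_pow_char_pow a b p e)

@[simp] theorem frobLe_apply (e : ℕ) (a : L) : frobLe p L e a = a ^ p ^ e := rfl

end Aux

section Bridge

open WittVector

variable {p : ℕ} [hp : Fact p.Prime] {L : Type} [Field L] [CharP L p] {k n : ℕ}

theorem trunc_out (x : TruncatedWittVector p k L) : WittVector.truncate k x.out = x := by
  apply TruncatedWittVector.ext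
  intro i
  rw [WittVector.coeff_truncate, TruncatedWittVector.coeff_out]

theorem tcoeff_sub (x y : TruncatedWittVector p k L) (i : Fin k) :
    (x - y).coeff i = (x.out - y.out).coeff (i : ℕ) := by
  have h : x - y = WittVector.truncate k (x.out - y.out) := by
    rw [map_sub, trunc_out, trunc_out]
  rw [h, WittVector.coeff_truncate]

theorem tcoeff_add (x y : TruncatedWittVector p k L) (i : Fin k) :
    (x + y).coeff i = (x.out + y.out).coeff (i : ℕ) := by
  have h : x + y = WittVector.truncate k (x.out + y.out) := by
    rw [map_add, trunc_out, trunc_out]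
  rw [h, WittVector.coeff_truncate]

theorem wP_via (w : WittVector p L) (x : TruncatedWittVector p n L)
    (h : WittVector.truncate n w = x) :
    wP x = WittVector.truncate (n + 1) (w * (p : WittVector p L)) := by
  apply TruncatedWittVector.ext
  intro i
  have hmain : wP x = WittVector.truncate (n + 1) ((wRes x : TruncatedWittVector p (n+1) L).out * (p : WittVector p L)) := by
    show p • (wRes x : TruncatedWittVector p (n+1) L) = _
    have h2 : (p : ℕ) • (wRes x : TruncatedWittVector p (n+1) L) =
        WittVector.truncate (n + 1) ((p : ℕ) • (wRes x : TruncatedWittVector p (n+1) L).out) := by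
      rw [map_nsmul, trunc_out]
    rw [h2]
    congr 1
    rw [nsmul_eq_mul, mul_comm]
  rw [hmain, WittVector.coeff_truncate, WittVector.coeff_truncate]
  rcases i with ⟨iv, hi⟩
  cases iv with
  | zero => rw [WittVector.mul_charP_coeff_zero, WittVector.mul_charP_coeff_zero]
  | succ j =>
    have hj : j < n := by omega
    rw [WittVector.mul_charP_coeff_succ, WittVector.mul_charP_coeff_succ]
    congr 1
    have h1 : (wRes x : TruncatedWittVector p (n+1) L).out.coeff j =
        (wRes x : TruncatedWittVector p (n+1) L).coeff ⟨j, by omega⟩ := by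
      exact TruncatedWittVector.coeff_out _ ⟨j, by omega⟩
    rw [h1]
    show (if h : j < n then x.coeff ⟨j, h⟩ else 0) = w.coeff j
    rw [dif_pos hj, ← h, WittVector.coeff_truncate]

theorem wP_coeff_zero (x : TruncatedWittVector p n L) :
    (wP x).coeff ⟨0, Nat.succ_pos n⟩ = 0 := by
  rw [wP_via x.out x (trunc_out x), WittVector.coeff_truncate]
  exact WittVector.mul_charP_coeff_zero _

theorem wP_coeff_succ (x : TruncatedWittVector p n L) (i : Fin n) :
    (wP x).coeff i.succ = x.coeff i ^ p := by
  rw [wP_via x.out x (trunc_out x), WittVector.coeff_truncate]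
  have : (i.succ : ℕ) = (i : ℕ) + 1 := rfl
  rw [this, WittVector.mul_charP_coeff_succ, TruncatedWittVector.coeff_out]

theorem wP_add (x y : TruncatedWittVector p n L) : wP (x + y) = wP x + wP y := by
  rw [wP_via (x.out + y.out) (x + y) (by rw [map_add, trunc_out, trunc_out]),
    add_mul, map_add, ← wP_via x.out x (trunc_out x), ← wP_via y.out y (trunc_out y)]

theorem wP_nsmul (m : ℕ) (x : TruncatedWittVector p n L) : wP (m • x) = m • wP x := by
  rw [wP_via (m • x.out) (m • x) (by rw [map_nsmul, trunc_out]), smul_mul_assoc, map_nsmul,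
    ← wP_via x.out x (trunc_out x)]

theorem wP_sub (x y : TruncatedWittVector p n L) : wP (x - y) = wP x - wP y := by
  rw [wP_via (x.out - y.out) (x - y) (by rw [map_sub, trunc_out, trunc_out]),
    sub_mul, map_sub, ← wP_via x.out x (trunc_out x), ← wP_via y.out y (trunc_out y)]

theorem p_smul_eq_wP_wR (y : TruncatedWittVector p (n + 1) L) : p • y = wP (wR y) := by
  have h : WittVector.truncate n y.out = wR y := by
    apply TruncatedWittVector.ext
    intro i
    rw [WittVector.coeff_truncate]
    have h1 : y.out.coeff (i : ℕ) = y.coeff i.castSucc := by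
      have := TruncatedWittVector.coeff_out y i.castSucc
      simpa using this
    rw [h1]
    rfl
  rw [wP_via y.out (wR y) h]
  have h2 : (p : ℕ) • y = WittVector.truncate (n + 1) ((p : ℕ) • y.out) := by
    rw [map_nsmul, trunc_out]
  rw [h2]
  congr 1
  rw [nsmul_eq_mul, mul_comm]

/-- `wP` as an additive monoid homomorphism. -/
def wPhom : TruncatedWittVector p n L →+ TruncatedWittVector p (n + 1) L :=
  AddMonoidHom.mk' wP wP_add

@[simp] theorem wPhom_apply (x : TruncatedWittVector p n L) : wPhom x = wP x := rfl

end Bridge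

section Box

open WittVector

variable {p : ℕ} [hp : Fact p.Prime] {L : Type} [Field L] [CharP L p]

/-- The scaled valuation bound `p^e • v a ≥ -c`. -/
def VB (D : DVField L) (p : ℕ) (c : ℤ) (e : ℕ) (a : L) : Prop :=
  ((-c : ℤ) : WithTop ℤ) ≤ (p ^ e : ℕ) • D.v a

/-- A coefficientwise "box" inside the truncated Witt vectors. -/
def BoxS (D : DVField L) (p : ℕ) (c : ℕ → ℤ) (k : ℕ) : Set (TruncatedWittVector p k L) :=
  {x | ∀ i : Fin k, VB D p (c (i : ℕ) * (p : ℤ) ^ (i : ℕ)) (k - 1) (x.coeff i)}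

variable (D : DVField L)

theorem ppow_ne (e : ℕ) : (p : ℕ) ^ e ≠ 0 :=
  pow_ne_zero e hp.out.ne_zero

theorem VB_of_top {c : ℤ} {e : ℕ} {a : L} (h : D.v a = ⊤) : VB D p c e a := by
  unfold VB
  rw [h, nsmul_top_withtop _ (ppow_ne e)]
  exact le_top

theorem VB_zero_elt (c : ℤ) (e : ℕ) : VB D p c e (0 : L) :=
  VB_of_top D (D.v_zero')

theorem VB_coe {c : ℤ} {e : ℕ} {a : L} {t : ℤ} (h : D.v a = (t : WithTop ℤ)) :
    VB D p c e a ↔ -c ≤ ((p : ℤ)) ^ e * t := by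
  unfold VB
  rw [h, nsmul_coe_withtop, WithTop.coe_le_coe]
  constructor <;> intro h2 <;> [skip; skip] <;> (try push_cast at h2 ⊢) <;> linarith

theorem VB_mono {c c' : ℤ} (h : c ≤ c') {e : ℕ} {a : L} (hv : VB D p c e a) :
    VB D p c' e a := by
  refine le_trans ?_ hv
  rw [WithTop.coe_le_coe]
  omega

theorem VB_scale (c : ℤ) (e d : ℕ) (a : L) :
    VB D p (c * (p : ℤ) ^ d) (e + d) a ↔ VB D p c e a := by
  cases hv : D.v a with
  | top => simp [VB_of_top D hv]
  | coe t =>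
    rw [VB_coe D hv, VB_coe D hv]
    have hd : (0 : ℤ) < (p : ℤ) ^ d := pow_pos (by exact_mod_cast hp.out.pos) d
    have hpe : ((p : ℤ)) ^ (e + d) = (p : ℤ) ^ e * (p : ℤ) ^ d := pow_add _ _ _
    rw [hpe]
    constructor <;> intro h <;> nlinarith

theorem VB_of_nonneg {a : L} (ha : 0 ≤ D.v a) {c : ℤ} (hc : 0 ≤ c) (e : ℕ) :
    VB D p c e a := by
  cases hv : D.v a with
  | top => exact VB_of_top D hv
  | coe t =>
    rw [VB_coe D hv]
    rw [hv] at ha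
    have ht : (0 : ℤ) ≤ t := by exact_mod_cast ha
    have : (0:ℤ) ≤ (p:ℤ) ^ e * t := mul_nonneg (by positivity) ht
    omega

theorem VB_nonneg_out {a : L} {e : ℕ} (h : VB D p 0 e a) : 0 ≤ D.v a := by
  cases hv : D.v a with
  | top => exact le_top
  | coe t =>
    rw [VB_coe D hv] at h
    have hd : (0 : ℤ) < (p : ℤ) ^ e := pow_pos (by exact_mod_cast hp.out.pos) e
    have ht : (0 : ℤ) ≤ t := by nlinarith
    exact_mod_cast ht

theorem VB_frob (c : ℤ) (e : ℕ) (a : L) : VB D p c e (a ^ p) ↔ VB D p c (e + 1) a := by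
  unfold VB
  rw [D.v_pow, smul_smul, ← pow_succ]

/-- Integrality of initial coefficients is preserved by subtraction of Witt vectors. -/
theorem intTo_sub (w w' : WittVector p L) (j : ℕ)
    (hw : ∀ i < j, 0 ≤ D.v (w.coeff i)) (hw' : ∀ i < j, 0 ≤ D.v (w'.coeff i)) :
    ∀ i < j, 0 ≤ D.v ((w - w').coeff i) := by
  classical
  have lift : ∀ (u : WittVector p L), (∀ i < j, 0 ≤ D.v (u.coeff i)) →
      ∃ U : WittVector p (D.Oring (L := L)), WittVector.truncate j (WittVector.map (D.Oring (L := L)).subtype U) = WittVector.truncate j u := by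
    intro u hu
    refine ⟨WittVector.mk p (fun i => if h : 0 ≤ D.v (u.coeff i) then (⟨u.coeff i, h⟩ : D.Oring (L := L)) else 0), ?_⟩
    apply TruncatedWittVector.ext
    intro i
    rw [WittVector.coeff_truncate, WittVector.coeff_truncate, WittVector.map_coeff,
      WittVector.coeff_mk, dif_pos (hu i i.isLt)]
    rfl
  obtain ⟨U, hU⟩ := lift w hw
  obtain ⟨U', hU'⟩ := lift w' hw'
  intro i hi
  have htr : WittVector.truncate j (WittVector.map (D.Oring (L := L)).subtype (U - U')) =
      WittVector.truncate j (w - w') := by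
    rw [map_sub, map_sub, hU, hU', ← map_sub]
  have hco : (w - w').coeff i = ((U - U').coeff i : L) := by
    have h1 := congrArg (fun z => TruncatedWittVector.coeff (⟨i, hi⟩ : Fin j) z) htr
    simp only [WittVector.coeff_truncate] at h1
    rw [← h1, WittVector.map_coeff]
    rfl
  rw [hco]
  exact ((U - U').coeff i).2

/-- Boxes with monotone nonnegative bound functions are closed under subtraction. -/
theorem boxS_sub (c : ℕ → ℤ) (k : ℕ) (hmono : ∀ i j, i ≤ j → c i ≤ c j)
    (hnn : ∀ i, 0 ≤ c i) {x y : TruncatedWittVector p k L}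
    (hx : x ∈ BoxS D p c k) (hy : y ∈ BoxS D p c k) : x - y ∈ BoxS D p c k := by
  intro istar
  set e := k - 1 with he
  set γ : ℕ := (c (istar : ℕ)).toNat with hγdef
  have hγ : (γ : ℤ) = c (istar : ℕ) := Int.toNat_of_nonneg (hnn _)
  set Φ : WittVector p L → WittVector p L :=
    fun w => teichmuller p (D.z ^ γ) * WittVector.map (frobLe p L e) w with hΦ
  have hΦcoeff : ∀ (w : WittVector p L) (i : ℕ),
      (Φ w).coeff i = (D.z ^ γ) ^ p ^ i * (w.coeff i) ^ p ^ e := by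
    intro w i
    rw [hΦ]
    simp only
    rw [teich_mul_coeff, WittVector.map_coeff, frobLe_apply]
  have hΦval : ∀ (w : WittVector p L) (i : ℕ),
      D.v ((Φ w).coeff i) = (((p : ℤ) ^ i * (γ : ℤ) : ℤ) : WithTop ℤ) + (p^e : ℕ) • D.v (w.coeff i) := by
    intro w i
    rw [hΦcoeff, D.v_mul, D.v_pow, D.v_zpowN, nsmul_coe_withtop, D.v_pow]
    congr 2
  have hint : ∀ (u : TruncatedWittVector p k L), u ∈ BoxS D p c k →
      ∀ i < (istar : ℕ) + 1, 0 ≤ D.v ((Φ u.out).coeff i) := by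
    intro u hu i hii
    have hik : i < k := lt_of_le_of_lt (Nat.lt_succ_iff.mp hii) istar.isLt
    have hvb : VB D p (c i * (p : ℤ) ^ i) (k - 1) (u.out.coeff i) := by
      have h0 := hu ⟨i, hik⟩
      rw [← TruncatedWittVector.coeff_out u ⟨i, hik⟩] at h0
      simpa using h0
    rw [hΦval]
    cases hv : D.v (u.out.coeff i) with
    | top =>
      rw [nsmul_top_withtop _ (ppow_ne (p := p) e), add_top]
      exact le_top
    | coe t =>
      rw [VB_coe D hv] at hvb
      rw [nsmul_coe_withtop, ← WithTop.coe_add, ← WithTop.coe_zero, WithTop.coe_le_coe]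
      have hci : c i ≤ (γ : ℤ) := by rw [hγ]; exact hmono _ _ (Nat.lt_succ_iff.mp hii)
      have hpi : (0:ℤ) < (p:ℤ) ^ i := pow_pos (by exact_mod_cast hp.out.pos) i
      rw [← he] at hvb
      push_cast at hvb ⊢
      nlinarith [mul_le_mul_of_nonneg_left hci hpi.le]
  have hsub := intTo_sub D (Φ x.out) (Φ y.out) ((istar : ℕ) + 1)
    (hint x hx) (hint y hy) (istar : ℕ) (Nat.lt_succ_self _)
  have hΦsub : Φ x.out - Φ y.out = Φ (x.out - y.out) := by
    rw [hΦ]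
    simp only
    rw [map_sub, mul_sub]
  rw [hΦsub, hΦval] at hsub
  have hd : (x - y).coeff istar = (x.out - y.out).coeff (istar : ℕ) := tcoeff_sub x y istar
  rw [← hd] at hsub
  cases hv : D.v ((x - y).coeff istar) with
  | top => exact VB_of_top D hv
  | coe t =>
    rw [VB_coe D hv]
    rw [hv, nsmul_coe_withtop, ← WithTop.coe_add, ← WithTop.coe_zero, WithTop.coe_le_coe] at hsub
    rw [← hγ]
    push_cast at hsub ⊢
    linarith

theorem boxS_zero (c : ℕ → ℤ) (k : ℕ) : (0 : TruncatedWittVector p k L) ∈ BoxS D p c k := by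
  intro i
  rw [TruncatedWittVector.coeff_zero]
  exact VB_zero_elt D _ _

theorem boxS_add (c : ℕ → ℤ) (k : ℕ) (hmono : ∀ i j, i ≤ j → c i ≤ c j)
    (hnn : ∀ i, 0 ≤ c i) {x y : TruncatedWittVector p k L}
    (hx : x ∈ BoxS D p c k) (hy : y ∈ BoxS D p c k) : x + y ∈ BoxS D p c k := by
  have hny : (0 : TruncatedWittVector p k L) - y ∈ BoxS D p c k :=
    boxS_sub D c k hmono hnn (boxS_zero D c k) hy
  have h2 := boxS_sub D c k hmono hnn hx hny
  have h3 : x - ((0 : TruncatedWittVector p k L) - y) = x + y := by ring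
  rwa [h3] at h2

theorem boxS_subset (c c' : ℕ → ℤ) (k : ℕ) (h : ∀ i, c i ≤ c' i) :
    BoxS D p c k ⊆ BoxS D p c' k := by
  intro x hx i
  refine VB_mono D ?_ (hx i)
  have : (0:ℤ) ≤ (p:ℤ) ^ (i : ℕ) := by positivity
  have h2 := h (i : ℕ)
  nlinarith

end Box

section Stair

variable {p : ℕ} [hp : Fact p.Prime] {L : Type} [Field L] [CharP L p]

/-- The bound function describing `fil_ρ Wₖ` as a box. -/
def stairC (p ρ k : ℕ) (i : ℕ) : ℤ :=
  if ρ = 0 then 0 else if k - min (padicValNat p ρ) k ≤ i then (ρ : ℤ) else (ρ : ℤ) - 1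

theorem stair_nonneg (ρ k i : ℕ) : 0 ≤ stairC p ρ k i := by
  unfold stairC
  split_ifs <;> omega

theorem stair_mono (ρ k : ℕ) : ∀ i j, i ≤ j → stairC p ρ k i ≤ stairC p ρ k j := by
  intro i j hij
  unfold stairC
  split_ifs <;> omega

theorem stair_le (ρ k i : ℕ) : stairC p ρ k i ≤ (ρ : ℤ) := by
  unfold stairC
  split_ifs <;> omega

theorem stair_ge (ρ k i : ℕ) : (ρ : ℤ) - 1 ≤ stairC p ρ k i := by
  unfold stairC
  split_ifs <;> omega

theorem stair_thresh (ρ k : ℕ) (hρ : ρ ≠ 0) :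
    (k + 1) - min (padicValNat p (ρ * p)) (k + 1) = k - min (padicValNat p ρ) k := by
  rw [padicValNat.mul hρ hp.out.ne_zero, padicValNat.self hp.out.one_lt]
  omega

theorem stair_succ_eq (ρ k : ℕ) (hρ : ρ ≠ 0) (i : ℕ) :
    stairC p (ρ * p) (k + 1) i =
      if k - min (padicValNat p ρ) k ≤ i then ((ρ : ℤ) * p) else ((ρ : ℤ) * p) - 1 := by
  unfold stairC
  rw [if_neg (Nat.mul_ne_zero hρ hp.out.ne_zero), stair_thresh ρ k hρ]
  push_cast
  rfl

end Stair

section Equivalences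

open WittVector

variable {p : ℕ} [hp : Fact p.Prime] {L : Type} [Field L] [CharP L p] (D : DVField L)

theorem mem_filLog_iff (r k : ℕ) (x : TruncatedWittVector p k L) :
    x ∈ D.filLog p r k ↔ ∀ i : Fin k, VB D p (r : ℤ) (k - 1 - (i : ℕ)) (x.coeff i) :=
  Iff.rfl

theorem filLog_eq_box (r k : ℕ) : D.filLog p r k = BoxS D p (fun _ => (r : ℤ)) k := by
  ext x
  rw [mem_filLog_iff]
  constructor
  · intro h i
    have h2 := (VB_scale D (r : ℤ) (k - 1 - (i : ℕ)) (i : ℕ) (x.coeff i)).mpr (h i)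
    rwa [show k - 1 - (i : ℕ) + (i : ℕ) = k - 1 by have := i.isLt; omega] at h2
  · intro h i
    have h2 := h i
    rw [show k - 1 = k - 1 - (i : ℕ) + (i : ℕ) by have := i.isLt; omega] at h2
    exact (VB_scale D (r : ℤ) (k - 1 - (i : ℕ)) (i : ℕ) (x.coeff i)).mp h2

theorem WO_eq_box (k : ℕ) : D.WO p k = BoxS D p (fun _ => 0) k := by
  ext x
  constructor
  · intro h i
    rw [zero_mul]
    exact VB_of_nonneg D (h i) le_rfl _
  · intro h i
    have h2 := h i
    rw [zero_mul] at h2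
    exact VB_nonneg_out D h2

theorem filKM_eq_box (ρ k : ℕ) : D.filKM p ρ k = BoxS D p (stairC p ρ k) k := by
  rcases Nat.eq_zero_or_pos ρ with hρ | hρ
  · subst hρ
    show D.WO p k = _
    rw [WO_eq_box]
    rfl
  have hρ' : ρ ≠ 0 := by omega
  show (if ρ = 0 then D.WO p k else _) = _
  rw [if_neg hρ']
  set m : ℕ := min (padicValNat p ρ) k with hm
  have hmk : m ≤ k := min_le_right _ _
  ext x
  constructor
  · rintro ⟨a, ha, b, hb, rfl⟩
    apply boxS_add D (stairC p ρ k) k (stair_mono ρ k) (stair_nonneg ρ k)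
    · refine boxS_subset D (fun _ => ((ρ - 1 : ℕ) : ℤ)) (stairC p ρ k) k
        (fun i => le_trans (by push_cast; omega) (stair_ge ρ k i)) ?_
      rw [← filLog_eq_box]
      exact ha
    · intro i
      show VB D p _ _ ((TruncatedWittVector.mk p _).coeff i)
      rw [TruncatedWittVector.coeff_mk]
      split_ifs with hcond
      · have hvb := hb ⟨(i : ℕ) - (k - m), hcond.2⟩
        have h2 := (VB_scale D (ρ : ℤ) (m - 1 - ((i : ℕ) - (k - m))) (i : ℕ) _).mpr hvb
        rw [show m - 1 - ((i : ℕ) - (k - m)) + (i : ℕ) = k - 1 by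
          have := i.isLt; have h3 := hcond.1; have h4 := hcond.2; omega] at h2
        refine VB_mono D ?_ h2
        have hpi : (0:ℤ) ≤ (p:ℤ) ^ (i : ℕ) := by positivity
        have : stairC p ρ k (i : ℕ) = (ρ : ℤ) := by
          unfold stairC
          rw [if_neg hρ', if_pos (by rw [← hm]; exact hcond.1)]
        rw [this]
      · exact VB_zero_elt D _ _
  · intro hx
    set a : TruncatedWittVector p k L :=
      TruncatedWittVector.mk p (fun i => if (i : ℕ) < k - m then x.coeff i else 0) with hadef
    have haBox : a ∈ BoxS D p (stairC p ρ k) k := by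
      intro i
      rw [hadef, TruncatedWittVector.coeff_mk]
      split_ifs with hcond
      · refine VB_mono D ?_ (hx i)
        exact le_rfl
      · exact VB_zero_elt D _ _
    have hdBox : x - a ∈ BoxS D p (stairC p ρ k) k :=
      boxS_sub D _ k (stair_mono ρ k) (stair_nonneg ρ k) hx haBox
    have hd0 : ∀ i : Fin k, (i : ℕ) < k - m → (x - a).coeff i = 0 := by
      intro i hi
      have htr : TruncatedWittVector.truncate (show k - m ≤ k by omega) (x - a) = 0 := by
        rw [map_sub]
        rw [sub_eq_zero]
        apply TruncatedWittVector.ext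
        intro j
        rw [TruncatedWittVector.coeff_truncate, TruncatedWittVector.coeff_truncate, hadef,
          TruncatedWittVector.coeff_mk]
        simp only [Fin.coe_castLE]
        rw [if_pos j.isLt]
      have h2 := congrArg (fun z => TruncatedWittVector.coeff (⟨(i : ℕ), hi⟩ : Fin (k - m)) z) htr
      simp only [TruncatedWittVector.coeff_truncate, TruncatedWittVector.coeff_zero] at h2
      have h3 : Fin.castLE (show k - m ≤ k by omega) (⟨(i : ℕ), hi⟩ : Fin (k - m)) = i :=
        Fin.ext rfl
      rwa [h3] at h2
    refine ⟨a, ?_, TruncatedWittVector.mk p (fun j : Fin m =>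
      (x - a).coeff ⟨k - m + (j : ℕ), by have := j.isLt; omega⟩), ?_, ?_⟩
    · -- a ∈ filLog (ρ - 1) k
      rw [filLog_eq_box]
      intro i
      rw [hadef, TruncatedWittVector.coeff_mk]
      split_ifs with hcond
      · refine VB_mono D ?_ (hx i)
        have hst : stairC p ρ k (i : ℕ) = (ρ : ℤ) - 1 := by
          unfold stairC
          rw [if_neg hρ', if_neg (by omega)]
        rw [hst]
        have hpi : (0:ℤ) ≤ (p:ℤ) ^ (i : ℕ) := by positivity
        have hcast : ((ρ - 1 : ℕ) : ℤ) = (ρ : ℤ) - 1 := by omega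
        rw [hcast]
      · exact VB_zero_elt D _ _
    · -- b ∈ filLog ρ m
      intro j
      rw [TruncatedWittVector.coeff_mk]
      have hvb := hdBox ⟨k - m + (j : ℕ), by have := j.isLt; omega⟩
      have hst : stairC p ρ k (k - m + (j : ℕ)) = (ρ : ℤ) := by
        unfold stairC
        rw [if_neg hρ', if_pos (by rw [← hm]; omega)]
      rw [hst] at hvb
      rw [show k - 1 = m - 1 - (j : ℕ) + (k - m + (j : ℕ)) by have := j.isLt; omega] at hvb
      exact (VB_scale D (ρ : ℤ) (m - 1 - (j : ℕ)) (k - m + (j : ℕ)) _).mp hvb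
    · -- x = a + wVit b
      have hwv : wVit (TruncatedWittVector.mk p (fun j : Fin m =>
          (x - a).coeff ⟨k - m + (j : ℕ), by have := j.isLt; omega⟩)) = x - a := by
        apply TruncatedWittVector.ext
        intro i
        by_cases hc : k - m ≤ (i : ℕ) ∧ (i : ℕ) - (k - m) < m
        · show (TruncatedWittVector.mk p _).coeff i = _
          rw [TruncatedWittVector.coeff_mk, dif_pos hc, TruncatedWittVector.coeff_mk]
          congr 1
          apply Fin.ext
          show k - m + ((i : ℕ) - (k - m)) = (i : ℕ)
          have h5 := hc.1
          omega
        · show (TruncatedWittVector.mk p _).coeff i = _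
          rw [TruncatedWittVector.coeff_mk, dif_neg hc]
          have hi : (i : ℕ) < k - m := by
            rcases Nat.lt_or_ge (i : ℕ) (k - m) with hi | hi
            · exact hi
            · exact absurd ⟨hi, by have := i.isLt; omega⟩ hc
          exact (hd0 i hi).symm
      rw [hwv]
      ring

end Equivalences

section Steps

open WittVector

variable {p : ℕ} [hp : Fact p.Prime] {L : Type} [Field L] [CharP L p] (D : DVField L)

theorem int_key (P ρ B : ℤ) (hP : 2 ≤ P) (hρ : 1 ≤ ρ) (h : -(ρ * P - 1) ≤ P * B) :
    -(ρ - 1) ≤ B := by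
  by_contra hB
  push_neg at hB
  have h1 : B ≤ -ρ := by omega
  have h2 : P * B ≤ P * (-ρ) := mul_le_mul_of_nonneg_left h1 (by omega)
  nlinarith

theorem int_y (P r c B d : ℤ) (hP : 2 ≤ P) (h0 : 0 ≤ c) (hc : c ≤ r) (h : -c ≤ P * B)
    (hd1 : r - 1 ≤ d) (hd0 : 0 ≤ d) : -d ≤ B := by
  by_contra hB
  push_neg at hB
  rcases le_or_gt c 0 with hc0 | hc0
  · have hc00 : c = 0 := le_antisymm hc0 h0
    subst hc00
    have h3 : B ≤ -1 := by omega
    have h4 : P * B ≤ P * (-1) := mul_le_mul_of_nonneg_left h3 (by omega)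
    rw [mul_neg_one] at h4
    simp only [neg_zero] at h
    linarith
  · have h1 : B ≤ -r := by omega
    have h2 : P * B ≤ P * (-r) := mul_le_mul_of_nonneg_left h1 (by omega)
    nlinarith

theorem hp2 : (2 : ℤ) ≤ (p : ℤ) := by exact_mod_cast hp.out.two_le

theorem stair_zero_eval (k i : ℕ) : stairC p 0 k i = 0 := by simp [stairC]

theorem key_restrict (ρ : ℕ) {n : ℕ} (f : TruncatedWittVector p (n + 1) L)
    (hf : f ∈ BoxS D p (stairC p (ρ * p) (n + 1)) (n + 1)) :
    wR f ∈ BoxS D p (stairC p ρ n) n := by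
  intro i
  have hn1 : 1 ≤ n := by have := i.isLt; omega
  have hco : (wR f).coeff i = f.coeff i.castSucc := rfl
  have hvb := hf i.castSucc
  rw [Fin.coe_castSucc] at hvb
  rw [hco]
  rcases Nat.eq_zero_or_pos ρ with hρ0 | hρpos
  · subst hρ0
    rw [show (0 * p) = 0 by ring, stair_zero_eval, zero_mul] at hvb
    rw [stair_zero_eval, zero_mul]
    exact VB_of_nonneg D (VB_nonneg_out D hvb) le_rfl _
  · have hρ' : ρ ≠ 0 := by omega
    rw [stair_succ_eq ρ n hρ'] at hvb
    by_cases hth : n - min (padicValNat p ρ) n ≤ (i : ℕ)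
    · rw [if_pos hth] at hvb
      have hst : stairC p ρ n (i : ℕ) = (ρ : ℤ) := by
        unfold stairC
        rw [if_neg hρ', if_pos hth]
      rw [hst]
      have hc : ((ρ : ℤ) * p) * (p : ℤ) ^ (i : ℕ) =
          ((ρ : ℤ) * (p : ℤ) ^ (i : ℕ)) * (p : ℤ) ^ 1 := by ring
      rw [hc, show n + 1 - 1 = (n - 1) + 1 by omega] at hvb
      exact (VB_scale D ((ρ : ℤ) * (p : ℤ) ^ (i : ℕ)) (n - 1) 1 _).mp hvb
    · rw [if_neg hth] at hvb
      have hst : stairC p ρ n (i : ℕ) = (ρ : ℤ) - 1 := by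
        unfold stairC
        rw [if_neg hρ', if_neg hth]
      rw [hst]
      cases hv : D.v (f.coeff i.castSucc) with
      | top => exact VB_of_top D hv
      | coe t =>
        rw [VB_coe D hv] at hvb
        rw [VB_coe D hv]
        set B : ℤ := (p : ℤ) ^ (n - 1 - (i : ℕ)) * t with hB
        have e1 : (p : ℤ) ^ (n - 1) * t = (p : ℤ) ^ (i : ℕ) * B := by
          rw [hB, ← mul_assoc, ← pow_add]
          congr 2
          omega
        have e2 : (p : ℤ) ^ (n + 1 - 1) * t = (p : ℤ) ^ (i : ℕ) * ((p : ℤ) * B) := by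
          rw [hB, show n + 1 - 1 = (i : ℕ) + (1 + (n - 1 - (i : ℕ))) by omega, pow_add, pow_add]
          ring
        rw [e2] at hvb
        rw [e1]
        have hPi : (0 : ℤ) < (p : ℤ) ^ (i : ℕ) := pow_pos (by exact_mod_cast hp.out.pos) _
        have h3 : -((ρ : ℤ) * p - 1) ≤ (p : ℤ) * B := by
          have h4 : -(((ρ : ℤ) * p - 1) * (p : ℤ) ^ (i : ℕ)) =
              (p : ℤ) ^ (i : ℕ) * (-((ρ : ℤ) * p - 1)) := by ring
          rw [h4] at hvb
          exact le_of_mul_le_mul_left hvb hPi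
        have h5 := int_key (p : ℤ) (ρ : ℤ) B (hp2 (p := p)) (by exact_mod_cast hρpos) h3
        nlinarith [mul_le_mul_of_nonneg_left h5 hPi.le]

theorem pad_box (ρ : ℕ) {n : ℕ} (u : TruncatedWittVector p n L)
    (hu : u ∈ BoxS D p (stairC p ρ n) n) :
    (wRes u : TruncatedWittVector p (n + 1) L) ∈ BoxS D p (stairC p (ρ * p) (n + 1)) (n + 1) := by
  intro i
  show VB D p _ _ ((TruncatedWittVector.mk p _).coeff i)
  rw [TruncatedWittVector.coeff_mk]
  split_ifs with hcond
  · have hvb := hu ⟨(i : ℕ), hcond⟩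
    rcases Nat.eq_zero_or_pos ρ with hρ0 | hρpos
    · subst hρ0
      rw [stair_zero_eval, zero_mul] at hvb
      rw [show (0 * p) = 0 by ring, stair_zero_eval, zero_mul]
      exact VB_of_nonneg D (VB_nonneg_out D hvb) le_rfl _
    · have hρ' : ρ ≠ 0 := by omega
      have hn1 : 1 ≤ n := by omega
      have h2 := (VB_scale D (stairC p ρ n (i : ℕ) * (p : ℤ) ^ (i : ℕ)) (n - 1) 1 _).mpr hvb
      rw [show n - 1 + 1 = n + 1 - 1 by omega] at h2
      refine VB_mono D ?_ h2
      rw [stair_succ_eq ρ n hρ']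
      have hPi : (0 : ℤ) ≤ (p : ℤ) ^ (i : ℕ) := by positivity
      have hkey : stairC p ρ n (i : ℕ) * (p : ℤ) ≤
          (if n - min (padicValNat p ρ) n ≤ (i : ℕ) then (ρ : ℤ) * p else (ρ : ℤ) * p - 1) := by
        unfold stairC
        rw [if_neg hρ']
        split_ifs with h6
        · exact le_rfl
        · nlinarith [hp2 (p := p)]
      calc stairC p ρ n (i : ℕ) * (p : ℤ) ^ (i : ℕ) * (p : ℤ) ^ 1
          = (stairC p ρ n (i : ℕ) * (p : ℤ)) * (p : ℤ) ^ (i : ℕ) := by ring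
        _ ≤ _ := mul_le_mul_of_nonneg_right hkey hPi
  · exact VB_zero_elt D _ _

end Steps

section YBox

open WittVector

variable {p : ℕ} [hp : Fact p.Prime] {L : Type} [Field L] [CharP L p] (D : DVField L)

theorem y_box (r m : ℕ) (y : TruncatedWittVector p m L)
    (hf : wP y ∈ BoxS D p (stairC p r (m + 1)) (m + 1)) :
    y ∈ BoxS D p (stairC p r m) m := by
  intro i
  have hvb := hf i.succ
  rw [show ((i.succ : Fin (m + 1)) : ℕ) = (i : ℕ) + 1 from rfl, wP_coeff_succ, VB_frob] at hvb
  rw [show (m + 1 - 1) + 1 = (m - 1 - (i : ℕ) + 1) + ((i : ℕ) + 1) by have := i.isLt; omega] at hvb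
  have h2 := (VB_scale D (stairC p r (m + 1) ((i : ℕ) + 1)) (m - 1 - (i : ℕ) + 1)
    ((i : ℕ) + 1) _).mp hvb
  rw [show m - 1 = (m - 1 - (i : ℕ)) + (i : ℕ) by have := i.isLt; omega]
  refine (VB_scale D (stairC p r m (i : ℕ)) (m - 1 - (i : ℕ)) (i : ℕ) _).mpr ?_
  cases hv : D.v (y.coeff i) with
  | top => exact VB_of_top D hv
  | coe t =>
    rw [VB_coe D hv] at h2 ⊢
    rw [show (p : ℤ) ^ (m - 1 - (i : ℕ) + 1) * t =
      (p : ℤ) * ((p : ℤ) ^ (m - 1 - (i : ℕ)) * t) by rw [pow_succ]; ring] at h2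
    exact int_y (p : ℤ) (r : ℤ) (stairC p r (m + 1) ((i : ℕ) + 1)) _ (stairC p r m (i : ℕ))
      (hp2 (p := p)) (stair_nonneg _ _ _) (stair_le _ _ _) h2 (stair_ge _ _ _) (stair_nonneg _ _ _)

end YBox

set_option maxHeartbeats 1600000

/-- (Weight-zero key step in lem:KerFnFnd-mod.)  Assume `O` is henselian
and admits a coefficient field `K ⊆ O`.  Then for all `r ≥ 0` and `n ≥ 1`:
`p̲(Wₙ(L)) ∩ Fil^p_r W_{n+1}(L) = p̲(Fil^p_r Wₙ(L))`; equivalently, if `p̲(x) ∈ Fil^p_r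
W_{n+1}(L)` then `x ∈ Fil^p_r Wₙ(L)`. -/
theorem statement17 (p : ℕ) [Fact p.Prime] (L : Type) [Field L] [CharP L p]
    (D : DVField L) (hhens : D.IsHenselian) (K : Subfield L) (hK : D.IsCoeffField K)
    (r n : ℕ) (hn : 1 ≤ n) :
    Set.range (wP (p := p) (L := L) (n := n)) ∩ D.FilP p r (n + 1) = wP '' D.FilP p r n ∧
    ∀ x : TruncatedWittVector p n L, wP x ∈ D.FilP p r (n + 1) → x ∈ D.FilP p r n := by
  have easy : ∀ x : TruncatedWittVector p n L, x ∈ D.FilP p r n → wP x ∈ D.FilP p r (n + 1) := by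
    intro x hx
    obtain ⟨u, hu, hxsum⟩ := hx
    have hub : ∀ s : Fin n, u s ∈ BoxS D p (stairC p (r * p ^ (s : ℕ)) n) n := by
      intro s
      have := hu s
      rwa [filKM_eq_box] at this
    refine ⟨fun s => if h : 0 < (s : ℕ) then
        (wRes (u ⟨(s : ℕ) - 1, by have := s.isLt; omega⟩) : TruncatedWittVector p (n + 1) L)
      else 0, ?_, ?_⟩
    · intro s
      beta_reduce
      rw [filKM_eq_box]
      by_cases h : 0 < (s : ℕ)
      · rw [dif_pos h]
        have h2 := pad_box D (r * p ^ ((s : ℕ) - 1))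
          (u ⟨(s : ℕ) - 1, by have := s.isLt; omega⟩) (hub _)
        rwa [show r * p ^ ((s : ℕ) - 1) * p = r * p ^ (s : ℕ) by
          rw [mul_assoc, ← pow_succ, show (s : ℕ) - 1 + 1 = (s : ℕ) by omega]] at h2
      · rw [dif_neg h]
        exact boxS_zero D _ _
    · rw [hxsum]
      rw [show wP (∑ t : Fin n, p ^ (t : ℕ) • u t) = wPhom (∑ t : Fin n, p ^ (t : ℕ) • u t)
        from rfl, map_sum, Fin.sum_univ_succ]
      beta_reduce
      rw [dif_neg (by simp : ¬ 0 < ((0 : Fin (n + 1)) : ℕ))]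
      rw [smul_zero, zero_add]
      refine Finset.sum_congr rfl ?_
      intro t _
      beta_reduce
      rw [wPhom_apply, wP_nsmul]
      rw [dif_pos (by simp [Fin.val_succ] : 0 < ((t.succ : Fin (n + 1)) : ℕ))]
      have hidx : (⟨((t.succ : Fin (n + 1)) : ℕ) - 1, by have := t.isLt; rw [Fin.val_succ]; omega⟩ : Fin n) = t := by
        apply Fin.ext
        simp [Fin.val_succ]
      rw [hidx]
      show p ^ (t : ℕ) • (p • (wRes (u t) : TruncatedWittVector p (n + 1) L)) = _
      rw [smul_smul, ← pow_succ]
      rfl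
  have hard : ∀ x : TruncatedWittVector p n L, wP x ∈ D.FilP p r (n + 1) → x ∈ D.FilP p r n := by
    obtain ⟨n', rfl⟩ : ∃ n', n = n' + 1 := ⟨n - 1, by omega⟩
    intro x hx
    obtain ⟨f, hf, hsum⟩ := hx
    set g : Fin (n' + 1) → TruncatedWittVector p (n' + 1) L := fun t => wR (f t.succ) with hg
    set w : TruncatedWittVector p (n' + 1) L := ∑ t : Fin (n' + 1), p ^ (t : ℕ) • g t with hw
    have hwPw : wP w = ∑ t : Fin (n' + 1), p ^ ((t : ℕ) + 1) • f t.succ := by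
      rw [hw, show wP (∑ t : Fin (n' + 1), p ^ (t : ℕ) • g t) =
        wPhom (∑ t : Fin (n' + 1), p ^ (t : ℕ) • g t) from rfl, map_sum]
      refine Finset.sum_congr rfl ?_
      intro t _
      rw [wPhom_apply, wP_nsmul, hg]
      show p ^ (t : ℕ) • wP (wR (f t.succ)) = _
      rw [← p_smul_eq_wP_wR, smul_smul, ← pow_succ]
    have hyP : wP (x - w) = f 0 := by
      rw [wP_sub, hsum, hwPw, Fin.sum_univ_succ]
      simp only [Fin.val_zero, pow_zero, one_smul, Fin.val_succ]
      exact add_sub_cancel_right _ _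
    have hfb : ∀ s : Fin (n' + 2), f s ∈ BoxS D p (stairC p (r * p ^ (s : ℕ)) (n' + 2)) (n' + 2) := by
      intro s
      have := hf s
      rwa [filKM_eq_box] at this
    have hyb : (x - w) ∈ BoxS D p (stairC p r (n' + 1)) (n' + 1) := by
      apply y_box D r (n' + 1) (x - w)
      rw [hyP]
      have h0 := hfb 0
      simpa using h0
    have hgb : ∀ t : Fin (n' + 1), g t ∈ BoxS D p (stairC p (r * p ^ (t : ℕ)) (n' + 1)) (n' + 1) := by
      intro t
      rw [hg]
      show wR (f t.succ) ∈ _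
      refine key_restrict D (r * p ^ (t : ℕ)) (f t.succ) ?_
      have h0 := hfb t.succ
      rwa [show r * p ^ ((t.succ : Fin (n' + 2)) : ℕ) = r * p ^ (t : ℕ) * p by
        rw [Fin.val_succ, pow_succ, mul_assoc]] at h0
    refine ⟨fun t => if h : (t : ℕ) = 0 then (x - w) + g 0 else g t, ?_, ?_⟩
    · intro s
      beta_reduce
      rw [filKM_eq_box]
      by_cases h : (s : ℕ) = 0
      · rw [dif_pos h]
        apply boxS_add D _ _ (stair_mono _ _) (stair_nonneg _ _)
        · rw [show r * p ^ (s : ℕ) = r by rw [h, pow_zero, mul_one]]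
          exact hyb
        · rw [show r * p ^ (s : ℕ) = r * p ^ ((0 : Fin (n' + 1)) : ℕ) by rw [h]; rfl]
          exact hgb 0
      · rw [dif_neg h]
        exact hgb s
    · rw [Fin.sum_univ_succ]
      beta_reduce
      rw [dif_pos (by simp : ((0 : Fin (n' + 1)) : ℕ) = 0)]
      have hrest : ∀ t : Fin n', (if h : ((t.succ : Fin (n' + 1)) : ℕ) = 0 then (x - w) + g 0
          else g t.succ) = g t.succ := by
        intro t
        rw [dif_neg (by simp [Fin.val_succ])]
      rw [Finset.sum_congr rfl (fun t _ => by rw [hrest t])]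
      rw [show ((0 : Fin (n' + 1)) : ℕ) = 0 from rfl, pow_zero, one_smul]
      have hw2 : w = g 0 + ∑ t : Fin n', p ^ ((t.succ : Fin (n' + 1)) : ℕ) • g t.succ := by
        rw [hw, Fin.sum_univ_succ]
        rw [show ((0 : Fin (n' + 1)) : ℕ) = 0 from rfl, pow_zero, one_smul]
      rw [hw2]
      abel
  refine ⟨?_, hard⟩
  ext v
  constructor
  · rintro ⟨⟨x, rfl⟩, hmem⟩
    exact ⟨x, hard x hmem, rfl⟩
  · rintro ⟨x, hx, rfl⟩
    exact ⟨⟨x, rfl⟩, easy x hx⟩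
end
end
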